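/- arXiv:2005.09840 — 9 statements merged into one kernel-verified Lean document; each statement's English description precedes it below -/
import Mathlib

section
/- Let H_0, H_1, ..., be a family of inner product spaces with linear maps D_j : H_j → H_j, T_j^+ : H_j → H_{j+1}, T_j^- : H_j → H_{j-1}, Δ_j : H_j → H_j and a constant c, satisfying for all j: (i) Δ_j = D_j² + (T_j^-)*T_j^- + (j(n+j-2) - n(n-1)/8)c, (ii) Δ_j = (T_j^+)*T_j^+ + ((n+2j-2)²/(n+2j)²)D_j² + ((j+1)(n+j-1) - n(n-1)/8)c, (iii) T_j^- D_j = ((n+2j-4)/(n+2j-2)) D_{j-1} T_j^-, (iv) D_j T_{j-1}^+ = ((n+2j-4)/(n+2j-2)) T_{j-1}^+ D_{j-1}, (v) T_{j-1}^+ = (T_j^-)*, and (vi) T_0^- = 0. Define B(s;j) := D_j² - ((n+2s-2)²/(n+2j-2)²)(Δ_j - (s(n+s-2) - n(n-1)/8)c). Then for every j ≥ 0, the product B(0;j)∘B(1;j)∘...∘B(j;j) = 0 on H_j. -/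
open scoped RealInnerProductSpace

/-- Abstract list-product factorization: if `B 0 0 = 0`, `B (j+1) (j+1) = -(Tp j ∘ Tm j)`,
and `B (j+1) s ∘ Tp j = r j • (Tp j ∘ B j s)`, then the product of the `B s j`,
`s = 0, …, j`, vanishes. -/
theorem fact_aux (H : ℕ → Type*) [∀ j, AddCommGroup (H j)] [∀ j, Module ℝ (H j)]
    (B : ∀ j, ℕ → Module.End ℝ (H j))
    (Tp : ∀ j, H j →ₗ[ℝ] H (j + 1))
    (Tm : ∀ j, H (j + 1) →ₗ[ℝ] H j)
    (r : ℕ → ℝ)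
    (hB0 : B 0 0 = 0)
    (hBjj : ∀ j, B (j + 1) (j + 1) = -(Tp j ∘ₗ Tm j : Module.End ℝ (H (j + 1))))
    (hcomm : ∀ j s, (B (j + 1) s : H (j + 1) →ₗ[ℝ] H (j + 1)) ∘ₗ Tp j
        = r j • (Tp j ∘ₗ (B j s : H j →ₗ[ℝ] H j))) :
    ∀ j, ((List.range (j + 1)).map (B j)).prod = 0 := by
  intro j
  induction j with
  | zero => simpa using hB0
  | succ j ih =>
    have key : ∀ k, (((List.range k).map (B (j + 1))).prod : H (j + 1) →ₗ[ℝ] H (j + 1)) ∘ₗ Tp j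
        = (r j ^ k) • (Tp j ∘ₗ (((List.range k).map (B j)).prod : H j →ₗ[ℝ] H j)) := by
      intro k
      induction k with
      | zero => simp [Module.End.one_eq_id]
      | succ k ihk =>
        simp only [List.range_succ, List.map_append, List.prod_append, List.map_singleton,
          List.prod_singleton]
        rw [Module.End.mul_eq_comp, Module.End.mul_eq_comp, LinearMap.comp_assoc,
          hcomm j k, LinearMap.comp_smul, ← LinearMap.comp_assoc, ihk,
          LinearMap.smul_comp, smul_smul, LinearMap.comp_assoc, pow_succ]
        ring_nf
    have hz : (((List.range (j + 1)).map (B (j + 1))).prod : H (j + 1) →ₗ[ℝ] H (j + 1)) ∘ₗ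
        Tp j = 0 := by
      rw [key (j + 1), ih]
      simp
    rw [List.range_succ, List.map_append, List.prod_append, List.map_singleton,
      List.prod_singleton, hBjj, mul_neg, Module.End.mul_eq_comp, ← LinearMap.comp_assoc, hz]
    simp

/-- Factorization formula (Theorem `thm:fact`), abstract form.  Given inner product
spaces `H j` with operators `D j`, `Δ j : H j → H j`, twistor operators
`Tp j = T_j^+ : H j → H (j+1)` and co-twistor operators `Tm j = T_{j+1}^- : H (j+1) → H j`
satisfying the Weitzenböck identities (i)–(vi) on a space of constant curvature `c`
(hypothesis (v) being that `T_j^+` is the adjoint of `T_{j+1}^-`, and (vi), `T_0^- = 0`,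
being incorporated in the `j = 0` case of (i)), the operators
`B(s;j) = D_j² - ((n+2s-2)²/(n+2j-2)²)(Δ_j - (s(n+s-2) - n(n-1)/8)c)` satisfy
`B(0;j) ∘ B(1;j) ∘ ⋯ ∘ B(j;j) = 0`. -/
theorem factorization_spinor (n : ℕ) (hn : 3 ≤ n) (c : ℝ)
    (H : ℕ → Type*) [∀ j, NormedAddCommGroup (H j)] [∀ j, InnerProductSpace ℝ (H j)]
    (D Δ : ∀ j, Module.End ℝ (H j))
    (Tp : ∀ j, H j →ₗ[ℝ] H (j + 1))
    (Tm : ∀ j, H (j + 1) →ₗ[ℝ] H j)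
    -- (v) : `T_j^+ = (T_{j+1}^-)^*`
    (hv : ∀ j (x : H j) (y : H (j + 1)), ⟪Tp j x, y⟫ = ⟪x, Tm j y⟫)
    -- (i) at `j = 0`, using (vi) `T_0^- = 0`
    (hi0 : Δ 0 = D 0 * D 0 + ((-((n : ℝ) * ((n : ℝ) - 1) / 8)) * c) • 1)
    -- (i) at `j + 1`
    (hi : ∀ j, Δ (j + 1) = D (j + 1) * D (j + 1)
        + (Tp j ∘ₗ Tm j : Module.End ℝ (H (j + 1)))
        + ((((j : ℝ) + 1) * ((n : ℝ) + (j : ℝ) - 1) - (n : ℝ) * ((n : ℝ) - 1) / 8) * c) • 1)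
    -- (ii)
    (hii : ∀ j, Δ j = (Tm j ∘ₗ Tp j : Module.End ℝ (H j))
        + ((((n : ℝ) + 2 * (j : ℝ) - 2) ^ 2 / ((n : ℝ) + 2 * (j : ℝ)) ^ 2) : ℝ) • (D j * D j)
        + ((((j : ℝ) + 1) * ((n : ℝ) + (j : ℝ) - 1) - (n : ℝ) * ((n : ℝ) - 1) / 8) * c) • 1)
    -- (iii)
    (hiii : ∀ j, Tm j ∘ₗ (D (j + 1) : H (j + 1) →ₗ[ℝ] H (j + 1))
        = (((n : ℝ) + 2 * (j : ℝ) - 2) / ((n : ℝ) + 2 * (j : ℝ)))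
          • ((D j : H j →ₗ[ℝ] H j) ∘ₗ Tm j))
    -- (iv)
    (hiv : ∀ j, (D (j + 1) : H (j + 1) →ₗ[ℝ] H (j + 1)) ∘ₗ Tp j
        = (((n : ℝ) + 2 * (j : ℝ) - 2) / ((n : ℝ) + 2 * (j : ℝ)))
          • (Tp j ∘ₗ (D j : H j →ₗ[ℝ] H j))) :
    ∀ j, ((List.range (j + 1)).map (fun s =>
      D j * D j - ((((n : ℝ) + 2 * (s : ℝ) - 2) ^ 2 / ((n : ℝ) + 2 * (j : ℝ) - 2) ^ 2) : ℝ)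
        • (Δ j - (((s : ℝ) * ((n : ℝ) + (s : ℝ) - 2) - (n : ℝ) * ((n : ℝ) - 1) / 8) * c) • 1))).prod
      = 0 := by
  have hn3 : (3 : ℝ) ≤ (n : ℝ) := by exact_mod_cast hn
  have hden : ∀ j : ℕ, ((n : ℝ) + 2 * (j : ℝ) - 2) ≠ 0 := by
    intro j
    have : (0 : ℝ) ≤ (j : ℝ) := Nat.cast_nonneg j
    nlinarith
  have hden' : ∀ j : ℕ, ((n : ℝ) + 2 * (j : ℝ)) ≠ 0 := by
    intro j
    have : (0 : ℝ) ≤ (j : ℝ) := Nat.cast_nonneg j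
    nlinarith
  -- base identity B(0;0) = 0
  have hB0 : D 0 * D 0
      - ((((n : ℝ) + 2 * ((0 : ℕ) : ℝ) - 2) ^ 2 / ((n : ℝ) + 2 * ((0 : ℕ) : ℝ) - 2) ^ 2) : ℝ)
        • (Δ 0 - ((((0 : ℕ) : ℝ) * ((n : ℝ) + ((0 : ℕ) : ℝ) - 2)
            - (n : ℝ) * ((n : ℝ) - 1) / 8) * c) • 1) = 0 := by
    rw [div_self (pow_ne_zero 2 (hden 0)), one_smul, hi0]
    have e2 : ((((0 : ℕ) : ℝ)) * ((n : ℝ) + (((0 : ℕ) : ℝ)) - 2)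
          - (n : ℝ) * ((n : ℝ) - 1) / 8) * c
        = (-((n : ℝ) * ((n : ℝ) - 1) / 8)) * c := by push_cast; ring
    rw [e2]
    abel
  -- top identity B(j+1;j+1) = -T⁺T⁻
  have hBjj : ∀ j : ℕ, D (j + 1) * D (j + 1)
      - ((((n : ℝ) + 2 * (((j + 1 : ℕ)) : ℝ) - 2) ^ 2
          / ((n : ℝ) + 2 * (((j + 1 : ℕ)) : ℝ) - 2) ^ 2) : ℝ)
        • (Δ (j + 1) - (((((j + 1 : ℕ)) : ℝ) * ((n : ℝ) + (((j + 1 : ℕ)) : ℝ) - 2)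
            - (n : ℝ) * ((n : ℝ) - 1) / 8) * c) • 1)
      = -(Tp j ∘ₗ Tm j : Module.End ℝ (H (j + 1))) := by
    intro j
    rw [div_self (pow_ne_zero 2 (hden (j + 1))), one_smul, hi j]
    have e2 : ((((j + 1 : ℕ)) : ℝ) * ((n : ℝ) + (((j + 1 : ℕ)) : ℝ) - 2)
          - (n : ℝ) * ((n : ℝ) - 1) / 8) * c
        = (((j : ℝ) + 1) * ((n : ℝ) + (j : ℝ) - 1) - (n : ℝ) * ((n : ℝ) - 1) / 8) * c := by
      push_cast; ring
    rw [e2]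
    abel
  -- commutation of B with T⁺
  have hcomm : ∀ j s : ℕ,
      ((D (j + 1) * D (j + 1)
        - ((((n : ℝ) + 2 * (s : ℝ) - 2) ^ 2 / ((n : ℝ) + 2 * (((j + 1 : ℕ)) : ℝ) - 2) ^ 2) : ℝ)
          • (Δ (j + 1) - (((s : ℝ) * ((n : ℝ) + (s : ℝ) - 2)
              - (n : ℝ) * ((n : ℝ) - 1) / 8) * c) • 1) : Module.End ℝ (H (j + 1)))
          : H (j + 1) →ₗ[ℝ] H (j + 1)) ∘ₗ Tp j
      = ((((n : ℝ) + 2 * (j : ℝ) - 2) ^ 2 / ((n : ℝ) + 2 * (j : ℝ)) ^ 2) : ℝ)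
        • (Tp j ∘ₗ ((D j * D j
          - ((((n : ℝ) + 2 * (s : ℝ) - 2) ^ 2 / ((n : ℝ) + 2 * (j : ℝ) - 2) ^ 2) : ℝ)
            • (Δ j - (((s : ℝ) * ((n : ℝ) + (s : ℝ) - 2)
                - (n : ℝ) * ((n : ℝ) - 1) / 8) * c) • 1) : Module.End ℝ (H j))
            : H j →ₗ[ℝ] H j)) := by
    intro j s
    have hD2 : ((D (j + 1) * D (j + 1) : Module.End ℝ (H (j + 1))) :
          H (j + 1) →ₗ[ℝ] H (j + 1)) ∘ₗ Tp j
        = ((((n : ℝ) + 2 * (j : ℝ) - 2) ^ 2 / ((n : ℝ) + 2 * (j : ℝ)) ^ 2) : ℝ)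
          • (Tp j ∘ₗ ((D j * D j : Module.End ℝ (H j)) : H j →ₗ[ℝ] H j)) := by
      rw [Module.End.mul_eq_comp, Module.End.mul_eq_comp, LinearMap.comp_assoc, hiv j,
        LinearMap.comp_smul, ← LinearMap.comp_assoc, hiv j, LinearMap.smul_comp, smul_smul,
        LinearMap.comp_assoc]
      congr 1
      rw [div_mul_div_comm, ← pow_two, ← pow_two]
    have hDel : ((Δ (j + 1) : Module.End ℝ (H (j + 1))) : H (j + 1) →ₗ[ℝ] H (j + 1)) ∘ₗ Tp j
        = Tp j ∘ₗ ((Δ j : Module.End ℝ (H j)) : H j →ₗ[ℝ] H j) := by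
      rw [hi j, hii j]
      simp only [LinearMap.add_comp, LinearMap.comp_add, LinearMap.smul_comp,
        LinearMap.comp_smul, Module.End.one_eq_id, LinearMap.id_comp, LinearMap.comp_id]
      rw [hD2, LinearMap.comp_assoc]
      abel
    have elam : (((n : ℝ) + 2 * (s : ℝ) - 2) ^ 2
          / ((n : ℝ) + 2 * (((j + 1 : ℕ)) : ℝ) - 2) ^ 2)
        = (((n : ℝ) + 2 * (j : ℝ) - 2) ^ 2 / ((n : ℝ) + 2 * (j : ℝ)) ^ 2)
          * (((n : ℝ) + 2 * (s : ℝ) - 2) ^ 2 / ((n : ℝ) + 2 * (j : ℝ) - 2) ^ 2) := by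
      have h1 : ((n : ℝ) + 2 * (((j + 1 : ℕ)) : ℝ) - 2) = ((n : ℝ) + 2 * (j : ℝ)) := by
        push_cast; ring
      rw [h1]
      rw [div_mul_div_comm]
      rw [mul_comm (((n : ℝ) + 2 * (j : ℝ) - 2) ^ 2) (((n : ℝ) + 2 * (s : ℝ) - 2) ^ 2),
        mul_comm (((n : ℝ) + 2 * (j : ℝ)) ^ 2) (((n : ℝ) + 2 * (j : ℝ) - 2) ^ 2),
        ← div_div, mul_div_assoc, div_self (pow_ne_zero 2 (hden j)), mul_one]
    rw [elam]
    simp only [LinearMap.sub_comp, LinearMap.comp_sub, LinearMap.smul_comp,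
      LinearMap.comp_smul, Module.End.one_eq_id, LinearMap.id_comp, LinearMap.comp_id]
    rw [hD2, hDel]
    module
  intro j
  simp only [bind_pure_comp, Functor.map, List.map_map]
  exact fact_aux H
    (fun j s => D j * D j
      - ((((n : ℝ) + 2 * (s : ℝ) - 2) ^ 2 / ((n : ℝ) + 2 * (j : ℝ) - 2) ^ 2) : ℝ)
        • (Δ j - (((s : ℝ) * ((n : ℝ) + (s : ℝ) - 2)
            - (n : ℝ) * ((n : ℝ) - 1) / 8) * c) • 1))
    Tp Tm (fun j => ((((n : ℝ) + 2 * (j : ℝ) - 2) ^ 2 / ((n : ℝ) + 2 * (j : ℝ)) ^ 2) : ℝ))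
    hB0 hBjj hcomm j
end

section
/- Under the hypotheses of the abstract factorization setup, for all s and j one has T_j^+ ∘ B(s;j) = ((n+2j)²/(n+2j-2)²) · B(s;j+1) ∘ T_j^+, and (T_j^-)* ∘ T_j^- = -B(j;j), and (T_j^+)* ∘ T_j^+ = -((n+2j-2)²/(n+2j)²) · B(j+1;j). -/
open scoped RealInnerProductSpace

set_option maxHeartbeats 1000000

/-- The key intertwining relations (eqn `2.key`) for the operators
`B(s;j) = D_j² - ((n+2s-2)²/(n+2j-2)²)(Δ_j - (s(n+s-2) - n(n-1)/8)c)` in the abstract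
factorization setup:  `T_j^+ B(s;j) = ((n+2j)²/(n+2j-2)²) B(s;j+1) T_j^+`,
`(T_j^-)^* T_j^- = -B(j;j)` (for `j ≥ 1`; for `j = 0`, `T_0^- = 0` and `B(0;0) = 0`), and
`(T_j^+)^* T_j^+ = -((n+2j-2)²/(n+2j)²) B(j+1;j)`. -/
theorem key_intertwining_relations (n : ℕ) (hn : 3 ≤ n) (c : ℝ)
    (H : ℕ → Type*) [∀ j, NormedAddCommGroup (H j)] [∀ j, InnerProductSpace ℝ (H j)]
    (D Δ : ∀ j, Module.End ℝ (H j))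
    (Tp : ∀ j, H j →ₗ[ℝ] H (j + 1))
    (Tm : ∀ j, H (j + 1) →ₗ[ℝ] H j)
    -- (v) : `T_j^+ = (T_{j+1}^-)^*`
    (hv : ∀ j (x : H j) (y : H (j + 1)), ⟪Tp j x, y⟫ = ⟪x, Tm j y⟫)
    -- (i) at `j = 0`, using (vi) `T_0^- = 0`
    (hi0 : Δ 0 = D 0 * D 0 + ((-((n : ℝ) * ((n : ℝ) - 1) / 8)) * c) • 1)
    -- (i) at `j + 1`
    (hi : ∀ j, Δ (j + 1) = D (j + 1) * D (j + 1)
        + (Tp j ∘ₗ Tm j : Module.End ℝ (H (j + 1)))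
        + ((((j : ℝ) + 1) * ((n : ℝ) + (j : ℝ) - 1) - (n : ℝ) * ((n : ℝ) - 1) / 8) * c) • 1)
    -- (ii)
    (hii : ∀ j, Δ j = (Tm j ∘ₗ Tp j : Module.End ℝ (H j))
        + ((((n : ℝ) + 2 * (j : ℝ) - 2) ^ 2 / ((n : ℝ) + 2 * (j : ℝ)) ^ 2) : ℝ) • (D j * D j)
        + ((((j : ℝ) + 1) * ((n : ℝ) + (j : ℝ) - 1) - (n : ℝ) * ((n : ℝ) - 1) / 8) * c) • 1)
    -- (iii)
    (hiii : ∀ j, Tm j ∘ₗ (D (j + 1) : H (j + 1) →ₗ[ℝ] H (j + 1))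
        = (((n : ℝ) + 2 * (j : ℝ) - 2) / ((n : ℝ) + 2 * (j : ℝ)))
          • ((D j : H j →ₗ[ℝ] H j) ∘ₗ Tm j))
    -- (iv)
    (hiv : ∀ j, (D (j + 1) : H (j + 1) →ₗ[ℝ] H (j + 1)) ∘ₗ Tp j
        = (((n : ℝ) + 2 * (j : ℝ) - 2) / ((n : ℝ) + 2 * (j : ℝ)))
          • (Tp j ∘ₗ (D j : H j →ₗ[ℝ] H j)))
    -- the operators `B(s;j)`
    (B : ∀ _ j : ℕ, Module.End ℝ (H j))
    (hB : ∀ s j, B s j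
      = D j * D j - ((((n : ℝ) + 2 * (s : ℝ) - 2) ^ 2 / ((n : ℝ) + 2 * (j : ℝ) - 2) ^ 2) : ℝ)
        • (Δ j - (((s : ℝ) * ((n : ℝ) + (s : ℝ) - 2) - (n : ℝ) * ((n : ℝ) - 1) / 8) * c) • 1)) :
    (∀ s j, Tp j ∘ₗ (B s j : H j →ₗ[ℝ] H j)
        = ((((n : ℝ) + 2 * (j : ℝ)) ^ 2 / ((n : ℝ) + 2 * (j : ℝ) - 2) ^ 2) : ℝ)
          • ((B s (j + 1) : H (j + 1) →ₗ[ℝ] H (j + 1)) ∘ₗ Tp j))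
    ∧ (∀ j, (Tp j ∘ₗ Tm j : Module.End ℝ (H (j + 1))) = -B (j + 1) (j + 1))
    ∧ B 0 0 = 0
    ∧ (∀ j, (Tm j ∘ₗ Tp j : Module.End ℝ (H j))
        = -(((((n : ℝ) + 2 * (j : ℝ) - 2) ^ 2 / ((n : ℝ) + 2 * (j : ℝ)) ^ 2) : ℝ)
          • B (j + 1) j)) := by
 
  have hn3 : (3:ℝ) ≤ (n:ℝ) := by exact_mod_cast hn
  have ha : ∀ j : ℕ, ((n:ℝ) + 2*(j:ℝ) - 2) ≠ 0 := fun j =>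
    ne_of_gt (by have := (Nat.cast_nonneg j : (0:ℝ) ≤ (j:ℝ)); linarith)
  have hb : ∀ j : ℕ, ((n:ℝ) + 2*(j:ℝ)) ≠ 0 := fun j =>
    ne_of_gt (by have := (Nat.cast_nonneg j : (0:ℝ) ≤ (j:ℝ)); linarith)
  -- D_{j+1}² ∘ Tp = ((n+2j-2)/(n+2j))² • (Tp ∘ D_j²)
  have hDD : ∀ j : ℕ, ((D (j+1) * D (j+1) : Module.End ℝ (H (j+1))) : H (j+1) →ₗ[ℝ] H (j+1)) ∘ₗ Tp j
      = ((((n:ℝ) + 2*(j:ℝ) - 2) / ((n:ℝ) + 2*(j:ℝ)))^2)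
        • (Tp j ∘ₗ ((D j * D j : Module.End ℝ (H j)) : H j →ₗ[ℝ] H j)) := by
    intro j
    rw [Module.End.mul_eq_comp, Module.End.mul_eq_comp, LinearMap.comp_assoc, hiv j,
      LinearMap.comp_smul, ← LinearMap.comp_assoc, hiv j, LinearMap.smul_comp,
      smul_smul, LinearMap.comp_assoc, sq]
  -- Tp ∘ Δ_j = Δ_{j+1} ∘ Tp
  have hTD : ∀ j : ℕ, Tp j ∘ₗ ((Δ j : Module.End ℝ (H j)) : H j →ₗ[ℝ] H j)
      = ((Δ (j+1) : Module.End ℝ (H (j+1))) : H (j+1) →ₗ[ℝ] H (j+1)) ∘ₗ Tp j := by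
    intro j
    rw [hi j, hii j]
    simp only [LinearMap.add_comp, LinearMap.comp_add, LinearMap.smul_comp,
      LinearMap.comp_smul, hDD j, LinearMap.comp_assoc, Module.End.one_eq_id,
      LinearMap.id_comp, LinearMap.comp_id, div_pow]
    match_scalars <;> ring
  refine ⟨?_, ?_, ?_, ?_⟩
  · intro s j
    have h1 : ((n:ℝ) + 2*(j:ℝ) - 2) ≠ 0 := ha j
    have h2 : ((n:ℝ) + 2*(j:ℝ)) ≠ 0 := hb j
    have h3 : ((n:ℝ) + 2*((j:ℝ)+1) - 2) ≠ 0 := fun h => h2 (by linarith)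
    rw [hB s j, hB s (j+1)]
    simp only [LinearMap.sub_comp, LinearMap.comp_sub, LinearMap.smul_comp,
      LinearMap.comp_smul, LinearMap.add_comp, LinearMap.comp_add, hDD j, hTD j,
      Module.End.one_eq_id, LinearMap.id_comp, LinearMap.comp_id, smul_sub]
    push_cast
    match_scalars <;> (field_simp [h1, h2, h3]; try ring)
  · intro j
    have h2 : ((n:ℝ) + 2*(j:ℝ)) ≠ 0 := hb j
    have h3 : ((n:ℝ) + 2*((j:ℝ)+1) - 2) ≠ 0 := fun h => h2 (by linarith)
    rw [hB (j+1) (j+1), hi j]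
    push_cast
    match_scalars <;> (field_simp [h2, h3]; try ring)
  · have h1 : ((n:ℝ) + 2*((0:ℕ):ℝ) - 2) ≠ 0 := ha 0
    have h1' : ((n:ℝ) - 2) ≠ 0 := fun h => h1 (by push_cast; linarith)
    rw [hB 0 0, hi0]
    push_cast
    match_scalars <;> (field_simp [h1, h1']; try ring)
  · intro j
    have h1 : ((n:ℝ) + 2*(j:ℝ) - 2) ≠ 0 := ha j
    have h2 : ((n:ℝ) + 2*(j:ℝ)) ≠ 0 := hb j
    rw [hB (j+1) j, hii j]
    push_cast
    match_scalars <;> (field_simp [h1, h2]; try ring)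
end

section
/- In the abstract factorization setting, for any φ ∈ ker T_s^- one has T_s^- T_{s+1}^- T_s^+ φ = 0; consequently, for all ψ in H_{s-1}, the inner product ⟨T_s^+ φ, T_s^+ T_{s-1}^+ ψ⟩ = 0, i.e., T_s^+(ker T_s^-) is orthogonal to T_s^+ T_{s-1}^+(H_{s-1}). -/
open scoped RealInnerProductSpace

/-- The orthogonality step in the grading decomposition (Theorem `thm:7`).
With `HA = Γ(S_{s-1})`, `HB = Γ(S_s)`, `HC = Γ(S_{s+1})`, the operators
`Tm1 = T_s^-`, `Tm2 = T_{s+1}^-`, `Tp1 = T_s^+`, `Tp0 = T_{s-1}^+`, and the operators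
`Bss = B(s+1;s)`, `Bsm = B(s+1;s-1)` built from `D`, `Δ`, one has for `φ ∈ ker T_s^-`:
`T_s^- T_{s+1}^- T_s^+ φ = 0`, hence `⟪T_s^+ φ, T_s^+ T_{s-1}^+ ψ⟫ = 0` for all `ψ`,
i.e. `T_s^+(ker T_s^-) ⊥ T_s^+ T_{s-1}^+(H_{s-1})`. -/
theorem orthogonality_step (n s : ℕ) (hn : 3 ≤ n) (c : ℝ)
    (HA HB HC : Type*)
    [NormedAddCommGroup HA] [InnerProductSpace ℝ HA]
    [NormedAddCommGroup HB] [InnerProductSpace ℝ HB]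
    [NormedAddCommGroup HC] [InnerProductSpace ℝ HC]
    (Ds ΔS : Module.End ℝ HB) (Dm Δm : Module.End ℝ HA)
    (Tm1 : HB →ₗ[ℝ] HA) (Tm2 : HC →ₗ[ℝ] HB)
    (Tp1 : HB →ₗ[ℝ] HC) (Tp0 : HA →ₗ[ℝ] HB)
    (Bss : Module.End ℝ HB)
    (hBss : Bss = Ds * Ds - ((((n : ℝ) + 2 * (s : ℝ)) ^ 2 / ((n : ℝ) + 2 * (s : ℝ) - 2) ^ 2) : ℝ)
      • (ΔS - ((((s : ℝ) + 1) * ((n : ℝ) + (s : ℝ) - 1) - (n : ℝ) * ((n : ℝ) - 1) / 8) * c) • 1))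
    (Bsm : Module.End ℝ HA)
    (hBsm : Bsm = Dm * Dm - ((((n : ℝ) + 2 * (s : ℝ)) ^ 2 / ((n : ℝ) + 2 * (s : ℝ) - 4) ^ 2) : ℝ)
      • (Δm - ((((s : ℝ) + 1) * ((n : ℝ) + (s : ℝ) - 1) - (n : ℝ) * ((n : ℝ) - 1) / 8) * c) • 1))
    -- `(T_s^+)^* T_s^+ = -((n+2s-2)²/(n+2s)²) B(s+1;s)`
    (h1 : (Tm2 ∘ₗ Tp1 : Module.End ℝ HB)
      = -(((((n : ℝ) + 2 * (s : ℝ) - 2) ^ 2 / ((n : ℝ) + 2 * (s : ℝ)) ^ 2) : ℝ) • Bss))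
    -- intertwining `T_s^- B(s+1;s) = ((n+2s-4)²/(n+2s)²) B(s+1;s-1) T_s^-`
    (h2 : Tm1 ∘ₗ (Bss : HB →ₗ[ℝ] HB)
      = ((((n : ℝ) + 2 * (s : ℝ) - 4) ^ 2 / ((n : ℝ) + 2 * (s : ℝ)) ^ 2) : ℝ)
        • ((Bsm : HA →ₗ[ℝ] HA) ∘ₗ Tm1))
    -- adjointness `T_{s-1}^+ = (T_s^-)^*` and `T_s^+ = (T_{s+1}^-)^*`
    (hadj0 : ∀ (x : HB) (y : HA), ⟪Tm1 x, y⟫ = ⟪x, Tp0 y⟫)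
    (hadj1 : ∀ (x : HB) (y : HC), ⟪Tp1 x, y⟫ = ⟪x, Tm2 y⟫)
    (φ : HB) (hφ : Tm1 φ = 0) :
    Tm1 (Tm2 (Tp1 φ)) = 0 ∧ ∀ ψ : HA, ⟪Tp1 φ, Tp1 (Tp0 ψ)⟫ = 0 := by
  have key : Tm1 (Tm2 (Tp1 φ)) = 0 := by
    have e1 : Tm2 (Tp1 φ)
        = -((((n : ℝ) + 2 * (s : ℝ) - 2) ^ 2 / ((n : ℝ) + 2 * (s : ℝ)) ^ 2) • Bss φ) := by
      have := congrArg (fun f : Module.End ℝ HB => f φ) h1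
      simpa using this
    have e2 : Tm1 (Bss φ)
        = (((n : ℝ) + 2 * (s : ℝ) - 4) ^ 2 / ((n : ℝ) + 2 * (s : ℝ)) ^ 2) • Bsm (Tm1 φ) := by
      have := congrArg (fun f : HB →ₗ[ℝ] HA => f φ) h2
      simpa using this
    rw [e1, map_neg, map_smul, e2, hφ, map_zero]
    simp
  refine ⟨key, fun ψ => ?_⟩
  calc ⟪Tp1 φ, Tp1 (Tp0 ψ)⟫ = ⟪Tp1 (Tp0 ψ), Tp1 φ⟫ := real_inner_comm _ _
    _ = ⟪Tp0 ψ, Tm2 (Tp1 φ)⟫ := hadj1 _ _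
    _ = ⟪Tm2 (Tp1 φ), Tp0 ψ⟫ := real_inner_comm _ _
    _ = ⟪Tm1 (Tm2 (Tp1 φ)), ψ⟫ := (hadj0 _ _).symm
    _ = 0 := by rw [key]; simp
end

section
/- In the abstract factorization setting, for any φ_s ∈ ker T_s^- one has B(s;j)(T_{j-1}^+ ⋯ T_s^+ φ_s) = 0; that is, W_s := T_{j-1}^+ ⋯ T_s^+(ker T_s^-) is contained in ker B(s;j). -/
variable {H : ℕ → Type*}

/-- The composite `T_{a+k-1}^+ ∘ ⋯ ∘ T_a^+ : H a → H (a+k)` of twistor operators. -/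
def iterTp [∀ j, AddCommGroup (H j)] [∀ j, Module ℝ (H j)]
    (Tp : ∀ j, H j →ₗ[ℝ] H (j + 1)) (a : ℕ) : ∀ k, H a →ₗ[ℝ] H (a + k)
  | 0 => LinearMap.id
  | k + 1 => Tp (a + k) ∘ₗ iterTp Tp a k

/-- The inclusion `W_s ⊆ ker B(s;j)` in Theorem `thm:7`: for `φ_s ∈ ker T_s^-`
(for `s = 0`, `T_0^- = 0` so the kernel is everything), one has
`B(s;j)(T_{j-1}^+ ⋯ T_s^+ φ_s) = 0`. -/
theorem W_s_in_ker_B (n : ℕ) (hn : 3 ≤ n) (c : ℝ)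
    [∀ j, NormedAddCommGroup (H j)] [∀ j, InnerProductSpace ℝ (H j)]
    (D Δ : ∀ j, Module.End ℝ (H j))
    (Tp : ∀ j, H j →ₗ[ℝ] H (j + 1))
    (Tm : ∀ j, H (j + 1) →ₗ[ℝ] H j)
    (B : ∀ _ j : ℕ, Module.End ℝ (H j))
    (hB : ∀ s j, B s j
      = D j * D j - ((((n : ℝ) + 2 * (s : ℝ) - 2) ^ 2 / ((n : ℝ) + 2 * (j : ℝ) - 2) ^ 2) : ℝ)
        • (Δ j - (((s : ℝ) * ((n : ℝ) + (s : ℝ) - 2) - (n : ℝ) * ((n : ℝ) - 1) / 8) * c) • 1))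
    -- intertwining `B(s;j+1) T_j^+ = ((n+2j-2)²/(n+2j)²) T_j^+ B(s;j)`
    (hint : ∀ s j, (B s (j + 1) : H (j + 1) →ₗ[ℝ] H (j + 1)) ∘ₗ Tp j
      = ((((n : ℝ) + 2 * (j : ℝ) - 2) ^ 2 / ((n : ℝ) + 2 * (j : ℝ)) ^ 2) : ℝ)
        • (Tp j ∘ₗ (B s j : H j →ₗ[ℝ] H j)))
    -- `B(s;s) φ = -(T_s^-)^* T_s^- φ = 0` on `ker T_s^-`
    (hker : ∀ s (φ : H (s + 1)), Tm s φ = 0 → B (s + 1) (s + 1) φ = 0)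
    -- `B(0;0) = 0` since `T_0^- = 0`
    (h00 : ∀ φ : H 0, B 0 0 φ = 0) :
    (∀ s k (φ : H (s + 1)), Tm s φ = 0 →
      B (s + 1) (s + 1 + k) (iterTp Tp (s + 1) k φ) = 0)
    ∧ (∀ k (φ : H 0), B 0 (0 + k) (iterTp Tp 0 k φ) = 0) := by
  have step : ∀ s a (x : H a), B s a x = 0 → B s (a + 1) (Tp a x) = 0 := by
    intro s a x hx
    have := congrArg (fun f : H a →ₗ[ℝ] H (a + 1) => f x) (hint s a)
    simp only [LinearMap.comp_apply, LinearMap.smul_apply] at this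
    rw [this, hx, map_zero, smul_zero]
  constructor
  · intro s k
    induction k with
    | zero => intro φ h; exact hker s φ h
    | succ k ih =>
        intro φ h
        exact step _ _ _ (ih φ h)
  · intro k
    induction k with
    | zero => exact h00
    | succ k ih =>
        intro φ
        exact step _ _ _ (ih φ)
end

section
/- The eigenvalue of D_j² on the Spin(n+1)-isotypic component V_j(k,s)' inside L²(S^n, S_j) is ((n+2s-2)²/(n+2j-2)²)·(j+k+n/2)². Abstract version: suppose Δ_j acts on V_j(k,s)' by the scalar (j+k+n/2)² + s(s+n-2) - n(n-1)/8, the Weitzenböck identities of Corollary 2.5 (with c=1) hold, T_j^+ maps V_j(k,s)' onto V_{j+1}(k-1,s)' for k≥1 and kills V_j(0,s)', and ker T_{j+1}^- = ⊕_k V_{j+1}(k,j+1)'. Then by induction on j, D_j² acts on V_j(k,s)' by ((n+2s-2)²/(n+2j-2)²)(j+k+n/2)². -/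
open scoped RealInnerProductSpace

private lemma dirac_sq_aux (a b e x : ℝ) (ha : a ≠ 0) (hb : b ≠ 0) :
    (a / b) ^ 2 * (e ^ 2 / a ^ 2 * x ^ 2) = e ^ 2 / b ^ 2 * x ^ 2 := by
  field_simp

/-- The eigenvalue of `D_j²` on the `Spin(n+1)`-isotypic component `V_j(k,s)'` of
`L²(S^n, S_j)` is `((n+2s-2)²/(n+2j-2)²)(j+k+n/2)²`, derived by induction on `j` from the
Weitzenböck identities (with curvature `c = 1`), the Laplacian eigenvalues, the
surjectivity of `T_j^+ : V_j(k+1,s)' → V_{j+1}(k,s)'`, its vanishing on `V_j(0,s)'`,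
and `ker T_{j+1}^- = ⊕_k V_{j+1}(k,j+1)'`. -/
theorem dirac_squared_eigenvalue_sphere (n : ℕ) (hn : 3 ≤ n)
    (H : ℕ → Type*) [∀ j, NormedAddCommGroup (H j)] [∀ j, InnerProductSpace ℝ (H j)]
    (D Δ : ∀ j, Module.End ℝ (H j))
    (Tp : ∀ j, H j →ₗ[ℝ] H (j + 1))
    (Tm : ∀ j, H (j + 1) →ₗ[ℝ] H j)
    (V : ∀ j, ℕ → ℕ → Submodule ℝ (H j))
    -- the Laplacian eigenvalue on `V_j(k,s)'` (Lemma `lem-delta`)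
    (hΔ : ∀ j k s, s ≤ j → ∀ φ ∈ V j k s,
      Δ j φ = ((((j : ℝ) + (k : ℝ) + (n : ℝ) / 2) ^ 2
        + (s : ℝ) * ((s : ℝ) + (n : ℝ) - 2) - (n : ℝ) * ((n : ℝ) - 1) / 8) : ℝ) • φ)
    -- adjointness `T_j^+ = (T_{j+1}^-)^*`
    (hv : ∀ j (x : H j) (y : H (j + 1)), ⟪Tp j x, y⟫ = ⟪x, Tm j y⟫)
    -- Weitzenböck formulas of Corollary 2.5 with `c = 1` (using `T_0^- = 0`)
    (hi0 : Δ 0 = D 0 * D 0 + (-((n : ℝ) * ((n : ℝ) - 1) / 8)) • 1)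
    (hi : ∀ j, Δ (j + 1) = D (j + 1) * D (j + 1)
        + (Tp j ∘ₗ Tm j : Module.End ℝ (H (j + 1)))
        + ((((j : ℝ) + 1) * ((n : ℝ) + (j : ℝ) - 1) - (n : ℝ) * ((n : ℝ) - 1) / 8) : ℝ) • 1)
    (hii : ∀ j, Δ j = (Tm j ∘ₗ Tp j : Module.End ℝ (H j))
        + ((((n : ℝ) + 2 * (j : ℝ) - 2) ^ 2 / ((n : ℝ) + 2 * (j : ℝ)) ^ 2) : ℝ) • (D j * D j)
        + ((((j : ℝ) + 1) * ((n : ℝ) + (j : ℝ) - 1) - (n : ℝ) * ((n : ℝ) - 1) / 8) : ℝ) • 1)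
    (hiv : ∀ j, (D (j + 1) : H (j + 1) →ₗ[ℝ] H (j + 1)) ∘ₗ Tp j
        = (((n : ℝ) + 2 * (j : ℝ) - 2) / ((n : ℝ) + 2 * (j : ℝ)))
          • (Tp j ∘ₗ (D j : H j →ₗ[ℝ] H j)))
    -- `T_j^+` maps `V_j(k+1,s)'` onto `V_{j+1}(k,s)'` …
    (hsurj : ∀ j k s, s ≤ j → ∀ ψ ∈ V (j + 1) k s, ∃ φ ∈ V j (k + 1) s, Tp j φ = ψ)
    -- … and kills `V_j(0,s)'`
    (hkill : ∀ j s, s ≤ j → ∀ φ ∈ V j 0 s, Tp j φ = 0)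
    -- `ker T_{j+1}^- = ⊕_k V_{j+1}(k, j+1)'`
    (hker : ∀ j, LinearMap.ker (Tm j) = ⨆ k, V (j + 1) k (j + 1)) :
    ∀ j k s, s ≤ j → ∀ φ ∈ V j k s,
      (D j * D j) φ
        = (((((n : ℝ) + 2 * (s : ℝ) - 2) ^ 2 / ((n : ℝ) + 2 * (j : ℝ) - 2) ^ 2)
            * ((j : ℝ) + (k : ℝ) + (n : ℝ) / 2) ^ 2) : ℝ) • φ := by
  have hn3 : (3:ℝ) ≤ (n:ℝ) := by exact_mod_cast hn
  have hnz : ∀ m : ℕ, ((n:ℝ) + 2*(m:ℝ) - 2) ≠ 0 := by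
    intro m
    have h0 : (0:ℝ) ≤ (m:ℝ) := Nat.cast_nonneg m
    nlinarith
  have hnz' : ∀ m : ℕ, ((n:ℝ) + 2*(m:ℝ)) ≠ 0 := by
    intro m
    have h0 : (0:ℝ) ≤ (m:ℝ) := Nat.cast_nonneg m
    nlinarith
  intro j
  induction j with
  | zero =>
    intro k s hs φ hφ
    obtain rfl : s = 0 := Nat.le_zero.mp hs
    have h1 := hΔ 0 k 0 le_rfl φ hφ
    have h2 := DFunLike.congr_fun hi0 φ
    rw [h1] at h2
    simp only [LinearMap.add_apply, LinearMap.smul_apply, Module.End.one_apply] at h2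
    have h4 := eq_sub_of_add_eq h2.symm
    rw [h4, ← sub_smul]
    congr 1
    rw [div_self (pow_ne_zero 2 (hnz 0))]
    push_cast
    ring
  | succ j ih =>
    intro k s hs φ hφ
    by_cases hsle : s ≤ j
    · obtain ⟨ψ, hψ, rfl⟩ := hsurj j k s hsle φ hφ
      have IH := ih (k+1) s hsle ψ hψ
      set c : ℝ := ((n:ℝ) + 2*(j:ℝ) - 2) / ((n:ℝ) + 2*(j:ℝ)) with hc
      have hDT : ∀ x : H j, D (j+1) (Tp j x) = c • Tp j (D j x) := by
        intro x
        have := LinearMap.congr_fun (hiv j) x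
        simpa using this
      have key : (D (j+1) * D (j+1)) (Tp j ψ)
          = (c^2) • Tp j ((D j * D j) ψ) := by
        have e1 : (D (j+1) * D (j+1)) (Tp j ψ) = D (j+1) (D (j+1) (Tp j ψ)) := rfl
        rw [e1, hDT ψ, map_smul, hDT (D j ψ), smul_smul, sq]
        rfl
      rw [key, IH, map_smul, smul_smul]
      congr 1
      have ex : ((j:ℝ) + ((k+1 : ℕ):ℝ) + (n:ℝ)/2) = (((j+1 : ℕ):ℝ) + (k:ℝ) + (n:ℝ)/2) := by
        push_cast; ring
      have eb : ((n:ℝ) + 2*(((j+1 : ℕ)):ℝ) - 2) = ((n:ℝ) + 2*(j:ℝ)) := by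
        push_cast; ring
      rw [hc, eb, ex]
      exact dirac_sq_aux _ _ _ _ (hnz j) (hnz' j)
    · obtain rfl : s = j + 1 := by omega
      have hTm : Tm j φ = 0 := by
        have hmem : φ ∈ LinearMap.ker (Tm j) := by
          rw [hker j]
          exact le_iSup (fun k => V (j+1) k (j+1)) k hφ
        exact LinearMap.mem_ker.mp hmem
      have h1 := hΔ (j+1) k (j+1) le_rfl φ hφ
      have h2 := DFunLike.congr_fun (hi j) φ
      rw [h1] at h2
      simp only [LinearMap.add_apply, LinearMap.comp_apply, LinearMap.smul_apply,
        Module.End.one_apply, hTm, map_zero, add_zero] at h2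
      have h4 := eq_sub_of_add_eq h2.symm
      rw [h4, ← sub_smul]
      congr 1
      rw [div_self (pow_ne_zero 2 (hnz (j+1)))]
      push_cast
      ring
end

section
/- Let T_j^+, T_j^-, Δ_j be operators on inner product spaces H_j (j = 0, 1, 2, ...) satisfying, for a constant c: (i) Δ_j = (j+1)(T_j^+)*T_j^+ - (n+j-3)(T_j^-)*T_j^- + 2j(n+j-2)c, (ii) (T_{j+1}^-)*T_{j+1}^- = ((j+1)(n+2j-2)/((n+j-2)(n+2j))) T_j^+(T_j^+)*, (iii) Δ_{j+1}T_j^+ = T_j^+ Δ_j, (iv) T_0^- = 0, (v) Δ_0 = (T_0^+)*T_0^+, and (vi) T_{j+1}^- is surjective onto H_j (or: post-composition by T_{j+1}^- can be cancelled). Then with a(s;j) = (j-s+1)(n+j+s-2)/((j+1)(n+2j-2)) and b(s;j) = j(n+j-1)+s(n+s-3), the product ∏_{s=0}^{j} ((T_j^+)*T_j^+ - a(s;j)(Δ_j - b(s;j)c)) = 0 on H_j for every j. -/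
open scoped RealInnerProductSpace

/-- Auxiliary: a monadically coerced `List.range` is a mapped `List.range`. -/
lemma map_bind_cast_aux {α : Type*} (m : ℕ) (g : ℝ → α) :
    List.map g (List.range m >>= fun a => pure ((a : ℕ) : ℝ))
      = (List.range m).map (fun a : ℕ => g (a : ℝ)) := by
  show List.map g ((List.range m).flatMap fun (a : ℕ) => [(a : ℝ)]) = _
  induction List.range m with
  | nil => simp
  | cons a l ih => simp [List.flatMap_cons, ih]

/-- Auxiliary: commuting a product of operators past an intertwiner. -/
lemma prod_comp_aux {V W : Type*} [AddCommGroup V] [Module ℝ V]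
    [AddCommGroup W] [Module ℝ W]
    (T : V →ₗ[ℝ] W) (P : ℕ → Module.End ℝ W) (Q : ℕ → Module.End ℝ V) (k : ℝ)
    (hkey : ∀ s, (P s : W →ₗ[ℝ] W) ∘ₗ T = k • (T ∘ₗ (Q s : V →ₗ[ℝ] V)))
    (l : List ℕ) :
    ((l.map P).prod : W →ₗ[ℝ] W) ∘ₗ T
      = k ^ l.length • (T ∘ₗ ((l.map Q).prod : V →ₗ[ℝ] V)) := by
  induction l with
  | nil => simp [Module.End.one_eq_id]
  | cons a l ihl =>
      simp only [List.map_cons, List.prod_cons, List.length_cons,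
        Module.End.mul_eq_comp, pow_succ]
      rw [LinearMap.comp_assoc, ihl, LinearMap.comp_smul, ← LinearMap.comp_assoc,
        hkey a, LinearMap.smul_comp, smul_smul, LinearMap.comp_assoc]

set_option maxHeartbeats 1000000 in
/-- Core induction for the factorization formula, with operators `B j = (T_{j+1}^-)^* T_{j+1}^-`
abstracted; no inner-product structure is needed. -/
lemma factorization_sym_aux (n : ℕ) (hn : 3 ≤ n) (c : ℝ)
    (H : ℕ → Type*) [∀ j, AddCommGroup (H j)] [∀ j, Module ℝ (H j)]
    (Δ : ∀ j, Module.End ℝ (H j))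
    (Tp : ∀ j, H j →ₗ[ℝ] H (j + 1)) (TpS : ∀ j, H (j + 1) →ₗ[ℝ] H j)
    (B : ∀ j, Module.End ℝ (H (j + 1)))
    (hi : ∀ j : ℕ, Δ (j + 1)
        = (((j : ℝ) + 2)) • (TpS (j + 1) ∘ₗ Tp (j + 1) : Module.End ℝ (H (j + 1)))
          - ((n : ℝ) + (j : ℝ) - 2) • B j
          + (2 * ((j : ℝ) + 1) * ((n : ℝ) + (j : ℝ) - 1) * c) • 1)
    (hii : ∀ j : ℕ, B j
        = (((j : ℝ) + 1) * ((n : ℝ) + 2 * (j : ℝ) - 2)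
            / (((n : ℝ) + (j : ℝ) - 2) * ((n : ℝ) + 2 * (j : ℝ))))
          • (Tp j ∘ₗ TpS j : Module.End ℝ (H (j + 1))))
    (hiii : ∀ j, (Δ (j + 1) : H (j + 1) →ₗ[ℝ] H (j + 1)) ∘ₗ Tp j
        = Tp j ∘ₗ (Δ j : H j →ₗ[ℝ] H j))
    (hv : Δ 0 = (TpS 0 ∘ₗ Tp 0 : Module.End ℝ (H 0))) :
    ∀ j, ((List.range (j + 1)).map (fun s : ℕ =>
      (TpS j ∘ₗ Tp j : Module.End ℝ (H j))
        - (((j : ℝ) - (s : ℝ) + 1) * ((n : ℝ) + (j : ℝ) + (s : ℝ) - 2)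
            / (((j : ℝ) + 1) * ((n : ℝ) + 2 * (j : ℝ) - 2)))
          • (Δ j - (((j : ℝ) * ((n : ℝ) + (j : ℝ) - 1)
              + (s : ℝ) * ((n : ℝ) + (s : ℝ) - 3)) * c) • 1))).prod
      = 0 := by
  have hnR : (3 : ℝ) ≤ (n : ℝ) := by exact_mod_cast hn
  intro j
  induction j with
  | zero =>
      have hn2 : ((n : ℝ) - 2) ≠ 0 := ne_of_gt (by linarith)
      simp only [List.range_succ, List.range_zero, List.nil_append, List.map_cons,
        List.map_nil, List.prod_cons, List.prod_nil, mul_one]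
      rw [hv]
      match_scalars <;> simp [hn2]
  | succ j ih =>
      have hj0 : (0 : ℝ) ≤ (j : ℝ) := Nat.cast_nonneg j
      have h1 : ((j : ℝ) + 1) ≠ 0 := by positivity
      have h2 : ((j : ℝ) + 2) ≠ 0 := by positivity
      have h2' : ((j : ℝ) + 1 + 1) ≠ 0 := by positivity
      have h3 : ((n : ℝ) + (j : ℝ) - 2) ≠ 0 := ne_of_gt (by linarith)
      have h4 : ((n : ℝ) + 2 * (j : ℝ)) ≠ 0 := ne_of_gt (by linarith)
      have h5 : ((n : ℝ) + 2 * (j : ℝ) - 2) ≠ 0 := ne_of_gt (by linarith)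
      have h6 : ((n : ℝ) + 2 * ((j : ℝ) + 1) - 2) ≠ 0 := ne_of_gt (by linarith)
      have h7 : ((n : ℝ) + 2 * ((j : ℝ) + 1)) ≠ 0 := ne_of_gt (by linarith)
      have h4' : ((n : ℝ) + (j : ℝ) * 2) ≠ 0 := ne_of_gt (by linarith)
      have h5' : ((n : ℝ) + (j : ℝ) * 2 - 2) ≠ 0 := ne_of_gt (by linarith)
      have h6' : ((n : ℝ) + ((j : ℝ) + 1) * 2 - 2) ≠ 0 := ne_of_gt (by linarith)
      set k : ℝ := ((j : ℝ) + 1) * ((n : ℝ) + 2 * (j : ℝ) - 2)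
          / (((j : ℝ) + 2) * ((n : ℝ) + 2 * (j : ℝ))) with hk
      -- express `(T_{j+1}^+)^* T_{j+1}^+` through `Δ_{j+1}` and `T_j^+ (T_j^+)^*`
      have hA1 : (TpS (j + 1) ∘ₗ Tp (j + 1) : Module.End ℝ (H (j + 1)))
          = (((j : ℝ) + 2)⁻¹) • (Δ (j + 1)
              + (((j : ℝ) + 1) * ((n : ℝ) + 2 * (j : ℝ) - 2) / ((n : ℝ) + 2 * (j : ℝ)))
                • (Tp j ∘ₗ TpS j : Module.End ℝ (H (j + 1)))
              - (2 * ((j : ℝ) + 1) * ((n : ℝ) + (j : ℝ) - 1) * c) • 1) := by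
        rw [hi j, hii j]
        match_scalars <;> (field_simp; try ring)
      -- the key intertwining identity
      have key : ∀ s : ℕ,
          ((TpS (j + 1) ∘ₗ Tp (j + 1) : Module.End ℝ (H (j + 1)))
            - ((((j + 1 : ℕ) : ℝ) - (s : ℝ) + 1) * ((n : ℝ) + ((j + 1 : ℕ) : ℝ) + (s : ℝ) - 2)
                / ((((j + 1 : ℕ) : ℝ) + 1) * ((n : ℝ) + 2 * ((j + 1 : ℕ) : ℝ) - 2)))
              • (Δ (j + 1) - ((((j + 1 : ℕ) : ℝ) * ((n : ℝ) + ((j + 1 : ℕ) : ℝ) - 1)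
                  + (s : ℝ) * ((n : ℝ) + (s : ℝ) - 3)) * c) • 1)
            : H (j + 1) →ₗ[ℝ] H (j + 1)) ∘ₗ Tp j
          = k • (Tp j ∘ₗ
              ((TpS j ∘ₗ Tp j : Module.End ℝ (H j))
                - (((j : ℝ) - (s : ℝ) + 1) * ((n : ℝ) + (j : ℝ) + (s : ℝ) - 2)
                    / (((j : ℝ) + 1) * ((n : ℝ) + 2 * (j : ℝ) - 2)))
                  • (Δ j - (((j : ℝ) * ((n : ℝ) + (j : ℝ) - 1)
                      + (s : ℝ) * ((n : ℝ) + (s : ℝ) - 3)) * c) • 1)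
                : H j →ₗ[ℝ] H j)) := by
        intro s
        rw [hA1]
        simp only [LinearMap.sub_comp, LinearMap.add_comp, LinearMap.smul_comp,
          LinearMap.comp_sub, LinearMap.comp_add, LinearMap.comp_smul,
          LinearMap.comp_assoc, Module.End.one_eq_id, LinearMap.id_comp,
          LinearMap.comp_id, hiii j, hk]
        match_scalars <;> (push_cast; field_simp; try ring)
      -- the last factor of the product is proportional to `T_j^+ (T_j^+)^*`
      have hlast :
          ((TpS (j + 1) ∘ₗ Tp (j + 1) : Module.End ℝ (H (j + 1)))
            - ((((j + 1 : ℕ) : ℝ) - ((j + 1 : ℕ) : ℝ) + 1)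
                * ((n : ℝ) + ((j + 1 : ℕ) : ℝ) + ((j + 1 : ℕ) : ℝ) - 2)
                / ((((j + 1 : ℕ) : ℝ) + 1) * ((n : ℝ) + 2 * ((j + 1 : ℕ) : ℝ) - 2)))
              • (Δ (j + 1) - ((((j + 1 : ℕ) : ℝ) * ((n : ℝ) + ((j + 1 : ℕ) : ℝ) - 1)
                  + ((j + 1 : ℕ) : ℝ) * ((n : ℝ) + ((j + 1 : ℕ) : ℝ) - 3)) * c) • 1))
          = k • (Tp j ∘ₗ TpS j : Module.End ℝ (H (j + 1))) := by
        rw [hi j, hii j, hk]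
        match_scalars <;> (push_cast; field_simp [h6']; ring)
      -- commute the remaining product past `T_j^+` and use the induction hypothesis
      have main := prod_comp_aux (Tp j)
          (fun s : ℕ =>
            (TpS (j + 1) ∘ₗ Tp (j + 1) : Module.End ℝ (H (j + 1)))
              - ((((j + 1 : ℕ) : ℝ) - (s : ℝ) + 1) * ((n : ℝ) + ((j + 1 : ℕ) : ℝ) + (s : ℝ) - 2)
                  / ((((j + 1 : ℕ) : ℝ) + 1) * ((n : ℝ) + 2 * ((j + 1 : ℕ) : ℝ) - 2)))
                • (Δ (j + 1) - ((((j + 1 : ℕ) : ℝ) * ((n : ℝ) + ((j + 1 : ℕ) : ℝ) - 1)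
                    + (s : ℝ) * ((n : ℝ) + (s : ℝ) - 3)) * c) • 1))
          (fun s : ℕ =>
            (TpS j ∘ₗ Tp j : Module.End ℝ (H j))
              - (((j : ℝ) - (s : ℝ) + 1) * ((n : ℝ) + (j : ℝ) + (s : ℝ) - 2)
                  / (((j : ℝ) + 1) * ((n : ℝ) + 2 * (j : ℝ) - 2)))
                • (Δ j - (((j : ℝ) * ((n : ℝ) + (j : ℝ) - 1)
                    + (s : ℝ) * ((n : ℝ) + (s : ℝ) - 3)) * c) • 1))
          k key (List.range (j + 1))
      rw [ih] at main
      simp only [LinearMap.comp_zero, smul_zero] at main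
      rw [List.range_succ, List.map_append, List.map_cons, List.map_nil,
        List.prod_append, List.prod_cons, List.prod_nil, mul_one,
        Module.End.mul_eq_comp, hlast, LinearMap.comp_smul, ← LinearMap.comp_assoc,
        main, LinearMap.zero_comp, smul_zero]

/-- Factorization formula for trace-free symmetric tensor fields (Theorem `thm:fact2`),
abstract form.  With `a(s;j) = (j-s+1)(n+j+s-2)/((j+1)(n+2j-2))` and
`b(s;j) = j(n+j-1)+s(n+s-3)`, the hypotheses (i)–(vi) imply
`∏_{s=0}^{j} ((T_j^+)^*T_j^+ - a(s;j)(Δ_j - b(s;j)c)) = 0` on `H_j`. -/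
theorem factorization_sym (n : ℕ) (hn : 3 ≤ n) (c : ℝ)
    (H : ℕ → Type*) [∀ j, NormedAddCommGroup (H j)] [∀ j, InnerProductSpace ℝ (H j)]
    (Δ : ∀ j, Module.End ℝ (H j))
    (Tp : ∀ j, H j →ₗ[ℝ] H (j + 1)) (TpS : ∀ j, H (j + 1) →ₗ[ℝ] H j)
    (Tm : ∀ j, H (j + 1) →ₗ[ℝ] H j) (TmS : ∀ j, H j →ₗ[ℝ] H (j + 1))
    -- `TpS j = (T_j^+)^*`, `TmS j = (T_{j+1}^-)^*`
    (hTpS : ∀ j (x : H j) (y : H (j + 1)), ⟪Tp j x, y⟫ = ⟪x, TpS j y⟫)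
    (hTmS : ∀ j (x : H (j + 1)) (y : H j), ⟪Tm j x, y⟫ = ⟪x, TmS j y⟫)
    -- (i) at `j + 1`:  `Δ_j = (j+1)(T_j^+)^*T_j^+ - (n+j-3)(T_j^-)^*T_j^- + 2j(n+j-2)c`
    (hi : ∀ j : ℕ, Δ (j + 1)
        = (((j : ℝ) + 2)) • (TpS (j + 1) ∘ₗ Tp (j + 1) : Module.End ℝ (H (j + 1)))
          - ((n : ℝ) + (j : ℝ) - 2) • (TmS j ∘ₗ Tm j : Module.End ℝ (H (j + 1)))
          + (2 * ((j : ℝ) + 1) * ((n : ℝ) + (j : ℝ) - 1) * c) • 1)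
    -- (ii)
    (hii : ∀ j : ℕ, (TmS j ∘ₗ Tm j : Module.End ℝ (H (j + 1)))
        = (((j : ℝ) + 1) * ((n : ℝ) + 2 * (j : ℝ) - 2)
            / (((n : ℝ) + (j : ℝ) - 2) * ((n : ℝ) + 2 * (j : ℝ))))
          • (Tp j ∘ₗ TpS j : Module.End ℝ (H (j + 1))))
    -- (iii)
    (hiii : ∀ j, (Δ (j + 1) : H (j + 1) →ₗ[ℝ] H (j + 1)) ∘ₗ Tp j
        = Tp j ∘ₗ (Δ j : H j →ₗ[ℝ] H j))
    -- (iv), (v): `T_0^- = 0` and `Δ_0 = (T_0^+)^* T_0^+`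
    (hv : Δ 0 = (TpS 0 ∘ₗ Tp 0 : Module.End ℝ (H 0)))
    -- (vi): `T_{j+1}^-` is surjective
    (hvi : ∀ j, Function.Surjective (Tm j)) :
    ∀ j, ((List.range (j + 1)).map (fun s =>
      (TpS j ∘ₗ Tp j : Module.End ℝ (H j))
        - (((j : ℝ) - (s : ℝ) + 1) * ((n : ℝ) + (j : ℝ) + (s : ℝ) - 2)
            / (((j : ℝ) + 1) * ((n : ℝ) + 2 * (j : ℝ) - 2)))
          • (Δ j - (((j : ℝ) * ((n : ℝ) + (j : ℝ) - 1)
              + (s : ℝ) * ((n : ℝ) + (s : ℝ) - 3)) * c) • 1))).prod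
      = 0 := by
  intro j
  rw [map_bind_cast_aux]
  exact factorization_sym_aux n hn c H Δ Tp TpS (fun j => TmS j ∘ₗ Tm j)
    hi hii hiii hv j
end

section
/- The eigenvalue of (T_j^+)*T_j^+ on V_j(k,s) ⊂ L²(S^n, Sym₀^j) is k(n+k+2j-1)(j-s+1)(n+j+s-2)/((j+1)(n+2j-2)). Abstract inductive version: given the Weitzenböck relations of Proposition 4.4 with c = 1, the Laplacian eigenvalue (j+k)(n+k+j-1)+s(s+n-3) on V_j(k,s), the intertwining T_j^+ : V_j(k,s) → V_{j+1}(k-1,s) for k ≥ 1, and ker T_{j+1}^- = ⊕_k V_{j+1}(k,j+1), prove by induction on j that (T_j^+)*T_j^+ acts on V_j(k,s) by the stated scalar. -/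
open scoped RealInnerProductSpace

private lemma aux_step (n j k s : ℝ) (h1 : n + j - 2 ≠ 0) (h2 : n + 2*j ≠ 0)
    (h3 : n + 2*j - 2 ≠ 0) (h4 : j + 1 ≠ 0) (h5 : j + 2 ≠ 0) :
    (j + 2)⁻¹ * ((j + 1 + k) * (n + k + (j + 1) - 1) + s * (s + n - 3)
      + (n + j - 2) * ((j + 1) * (n + 2 * j - 2) / ((n + j - 2) * (n + 2 * j))
        * ((k + 1) * (n + (k + 1) + 2 * j - 1) * (j - s + 1) * (n + j + s - 2)
          / ((j + 1) * (n + 2 * j - 2))))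
      - 2 * (j + 1) * (n + j - 1))
    = k * (n + k + 2 * (j + 1) - 1) * ((j + 1) - s + 1) * (n + (j + 1) + s - 2)
      / (((j + 1) + 1) * (n + 2 * (j + 1) - 2)) := by
  have h6 : j + 1 + 1 ≠ 0 := by intro h; apply h5; linarith
  have h7 : n + 2 * (j + 1) - 2 ≠ 0 := by intro h; apply h2; linarith
  have lhs_eq : (j + 2)⁻¹ * ((j + 1 + k) * (n + k + (j + 1) - 1) + s * (s + n - 3)
      + (n + j - 2) * ((j + 1) * (n + 2 * j - 2) / ((n + j - 2) * (n + 2 * j))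
        * ((k + 1) * (n + (k + 1) + 2 * j - 1) * (j - s + 1) * (n + j + s - 2)
          / ((j + 1) * (n + 2 * j - 2))))
      - 2 * (j + 1) * (n + j - 1))
    = (((j + 1 + k) * (n + k + (j + 1) - 1) + s * (s + n - 3)
        - 2 * (j + 1) * (n + j - 1)) * (n + 2 * j)
        + (k + 1) * (n + (k + 1) + 2 * j - 1) * (j - s + 1) * (n + j + s - 2))
      / ((j + 2) * (n + 2 * j)) := by
    have key : (n + j - 2) * ((j + 1) * (n + 2 * j - 2) / ((n + j - 2) * (n + 2 * j))
          * ((k + 1) * (n + (k + 1) + 2 * j - 1) * (j - s + 1) * (n + j + s - 2)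
            / ((j + 1) * (n + 2 * j - 2))))
        = (k + 1) * (n + (k + 1) + 2 * j - 1) * (j - s + 1) * (n + j + s - 2) / (n + 2 * j) := by
      rw [div_mul_div_comm, ← mul_div_assoc, div_eq_div_iff
        (mul_ne_zero (mul_ne_zero h1 h2) (mul_ne_zero h4 h3)) h2]
      ring
    rw [key]
    generalize (k + 1) * (n + (k + 1) + 2 * j - 1) * (j - s + 1) * (n + j + s - 2) = X
    rw [eq_div_iff (mul_ne_zero h5 h2)]
    linear_combination (((j + 1 + k) * (n + k + (j + 1) - 1) + s * (s + n - 3)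
      - 2 * (j + 1) * (n + j - 1)) * (n + 2 * j) + X / (n + 2 * j) * (n + 2 * j))
      * inv_mul_cancel₀ h5 + div_mul_cancel₀ X h2
  rw [lhs_eq, div_eq_div_iff (mul_ne_zero h5 h2) (mul_ne_zero h6 h7)]
  ring

private lemma aux_top (n j k : ℝ) (h2 : n + 2*j ≠ 0) (h5 : j + 2 ≠ 0) :
    (j + 2)⁻¹ * ((j + 1 + k) * (n + k + (j + 1) - 1) + (j + 1) * ((j + 1) + n - 3)
      - 2 * (j + 1) * (n + j - 1))
    = k * (n + k + 2 * (j + 1) - 1) * ((j + 1) - (j + 1) + 1) * (n + (j + 1) + (j + 1) - 2)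
      / (((j + 1) + 1) * (n + 2 * (j + 1) - 2)) := by
  have h6 : j + 1 + 1 ≠ 0 := by intro h; apply h5; linarith
  have h7 : n + 2 * (j + 1) - 2 ≠ 0 := by intro h; apply h2; linarith
  rw [inv_mul_eq_div, div_eq_div_iff h5 (mul_ne_zero h6 h7)]
  ring

set_option maxHeartbeats 1600000 in
/-- The eigenvalue of `(T_j^+)^* T_j^+` on the `SO(n+1)`-isotypic component `V_j(k,s)`
of `L²(S^n, Sym₀^j)` is `k(n+k+2j-1)(j-s+1)(n+j+s-2)/((j+1)(n+2j-2))`, derived by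
induction on `j` from the Weitzenböck relations of Proposition 4.4 (with `c = 1`), the
Laplacian eigenvalues, the intertwining `T_j^+ : V_j(k+1,s) → V_{j+1}(k,s)`, and
`ker T_{j+1}^- = ⊕_k V_{j+1}(k, j+1)`. -/
theorem sym_twistor_eigenvalue_sphere (n : ℕ) (hn : 3 ≤ n)
    (H : ℕ → Type*) [∀ j, NormedAddCommGroup (H j)] [∀ j, InnerProductSpace ℝ (H j)]
    (Δ : ∀ j, Module.End ℝ (H j))
    (Tp : ∀ j, H j →ₗ[ℝ] H (j + 1)) (TpS : ∀ j, H (j + 1) →ₗ[ℝ] H j)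
    (Tm : ∀ j, H (j + 1) →ₗ[ℝ] H j) (TmS : ∀ j, H j →ₗ[ℝ] H (j + 1))
    -- `TpS j` is the adjoint `(T_j^+)^*` and `TmS j` is the adjoint `(T_{j+1}^-)^*`
    (hTpS : ∀ j (x : H j) (y : H (j + 1)), ⟪Tp j x, y⟫ = ⟪x, TpS j y⟫)
    (hTmS : ∀ j (x : H (j + 1)) (y : H j), ⟪Tm j x, y⟫ = ⟪x, TmS j y⟫)
    (V : ∀ j, ℕ → ℕ → Submodule ℝ (H j))
    -- Laplacian eigenvalue on `V_j(k,s)` (Freudenthal)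
    (hΔ : ∀ j k s, s ≤ j → ∀ φ ∈ V j k s,
      Δ j φ = ((((j : ℝ) + (k : ℝ)) * ((n : ℝ) + (k : ℝ) + (j : ℝ) - 1)
        + (s : ℝ) * ((s : ℝ) + (n : ℝ) - 3)) : ℝ) • φ)
    -- Weitzenböck relations of Proposition 4.4 with `c = 1`
    (hW1 : ∀ j : ℕ, ((j : ℝ) + 2) • (TpS (j + 1) ∘ₗ Tp (j + 1) : Module.End ℝ (H (j + 1)))
        = Δ (j + 1) + ((n : ℝ) + (j : ℝ) - 2) • (TmS j ∘ₗ Tm j : Module.End ℝ (H (j + 1)))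
          - (2 * ((j : ℝ) + 1) * ((n : ℝ) + (j : ℝ) - 1)) • 1)
    (hW2 : ∀ j, (TmS j ∘ₗ Tm j : Module.End ℝ (H (j + 1)))
        = (((j : ℝ) + 1) * ((n : ℝ) + 2 * (j : ℝ) - 2)
            / (((n : ℝ) + (j : ℝ) - 2) * ((n : ℝ) + 2 * (j : ℝ))))
          • (Tp j ∘ₗ TpS j : Module.End ℝ (H (j + 1))))
    -- base case `Δ_0 = (T_0^+)^* T_0^+`
    (h0 : Δ 0 = (TpS 0 ∘ₗ Tp 0 : Module.End ℝ (H 0)))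
    -- the Laplacians intertwine with `T_j^+`
    (hcomm : ∀ j, (Δ (j + 1) : H (j + 1) →ₗ[ℝ] H (j + 1)) ∘ₗ Tp j
        = Tp j ∘ₗ (Δ j : H j →ₗ[ℝ] H j))
    -- `T_j^+` maps `V_j(k+1,s)` onto `V_{j+1}(k,s)` and kills `V_j(0,s)`
    (hsurj : ∀ j k s, s ≤ j → ∀ ψ ∈ V (j + 1) k s, ∃ φ ∈ V j (k + 1) s, Tp j φ = ψ)
    (hkill : ∀ j s, s ≤ j → ∀ φ ∈ V j 0 s, Tp j φ = 0)
    -- `ker T_{j+1}^- = ⊕_k V_{j+1}(k, j+1)`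
    (hker : ∀ j, LinearMap.ker (Tm j) = ⨆ k, V (j + 1) k (j + 1)) :
    ∀ j k s, s ≤ j → ∀ φ ∈ V j k s,
      (TpS j ∘ₗ Tp j) φ
        = (((k : ℝ) * ((n : ℝ) + (k : ℝ) + 2 * (j : ℝ) - 1) * ((j : ℝ) - (s : ℝ) + 1)
            * ((n : ℝ) + (j : ℝ) + (s : ℝ) - 2)
            / (((j : ℝ) + 1) * ((n : ℝ) + 2 * (j : ℝ) - 2))) : ℝ) • φ := by
  have hn' : (3:ℝ) ≤ (n:ℝ) := by exact_mod_cast hn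
  intro j
  induction j with
  | zero =>
    intro k s hs φ hφ
    interval_cases s
    have h := hΔ 0 k 0 le_rfl φ hφ
    rw [h0] at h
    rw [h]
    have hne : (n:ℝ) - 2 ≠ 0 := by linarith
    congr 1
    push_cast
    field_simp
    rw [eq_div_iff (by simpa using hne)]
    ring
  | succ j ih =>
    intro k s hs φ hφ
    have hj2 : ((j:ℝ) + 2) ≠ 0 := by positivity
    have hnj2 : (n:ℝ) + (j:ℝ) - 2 ≠ 0 := by
      have : (0:ℝ) ≤ (j:ℝ) := Nat.cast_nonneg j
      linarith
    have hn2j : (n:ℝ) + 2*(j:ℝ) ≠ 0 := by positivity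
    have hn2j2 : (n:ℝ) + 2*(j:ℝ) - 2 ≠ 0 := by
      have : (0:ℝ) ≤ (j:ℝ) := Nat.cast_nonneg j
      linarith
    have hj1 : ((j:ℝ) + 1) ≠ 0 := by positivity
    have hΔφ := hΔ (j+1) k s hs φ hφ
    have h1 := LinearMap.congr_fun (hW1 j) φ
    simp only [LinearMap.smul_apply, LinearMap.sub_apply, LinearMap.add_apply,
      Module.End.one_apply] at h1
    rw [hΔφ] at h1
    simp only [LinearMap.comp_apply] at h1
    have hX : TpS (j+1) (Tp (j+1) φ)
        = ((j:ℝ)+2)⁻¹ • (((j:ℝ)+2) • TpS (j+1) (Tp (j+1) φ)) := by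
      rw [smul_smul, inv_mul_cancel₀ hj2, one_smul]
    rcases Nat.lt_or_ge s (j+1) with hs' | hs'
    · -- s ≤ j : use surjectivity and induction hypothesis
      have hs'' : s ≤ j := Nat.lt_succ_iff.mp hs'
      obtain ⟨ψ, hψ, hTpψ⟩ := hsurj j k s hs'' φ hφ
      have hIH := ih (k+1) s hs'' ψ hψ
      have hPP : (Tp j ∘ₗ TpS j) φ = ((((k:ℕ)+1 : ℕ):ℝ) * ((n : ℝ) + (((k:ℕ)+1:ℕ):ℝ) + 2 * (j : ℝ) - 1)
          * ((j : ℝ) - (s : ℝ) + 1) * ((n : ℝ) + (j : ℝ) + (s : ℝ) - 2)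
          / (((j : ℝ) + 1) * ((n : ℝ) + 2 * (j : ℝ) - 2))) • φ := by
        rw [LinearMap.comp_apply, ← hTpψ, ← LinearMap.comp_apply (TpS j), hIH,
          map_smul, hTpψ]
      have h2 := LinearMap.congr_fun (hW2 j) φ
      simp only [LinearMap.smul_apply, LinearMap.comp_apply] at h2
      rw [LinearMap.comp_apply] at hPP
      rw [hPP] at h2
      rw [h2] at h1
      rw [LinearMap.comp_apply, hX, h1]
      rw [smul_smul, smul_smul, ← add_smul, ← sub_smul, smul_smul]
      congr 1
      push_cast
      linear_combination aux_step (n:ℝ) (j:ℝ) (k:ℝ) (s:ℝ) hnj2 hn2j hn2j2 hj1 hj2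
    · -- s = j + 1 : φ is in the kernel of Tm j
      have hseq : s = j + 1 := le_antisymm hs hs'
      subst hseq
      have hker' : φ ∈ LinearMap.ker (Tm j) := by
        rw [hker j]
        exact le_iSup (fun k => V (j+1) k (j+1)) k hφ
      have hTm : Tm j φ = 0 := hker'
      rw [hTm, map_zero, smul_zero, add_zero] at h1
      rw [LinearMap.comp_apply, hX, h1]
      rw [← sub_smul, smul_smul]
      congr 1
      push_cast
      linear_combination aux_top (n:ℝ) (j:ℝ) (k:ℝ) hn2j hj2
end

section
/- Let H_j (0 ≤ j ≤ N) be inner product spaces with operators T_j^+ : H_j → H_{j+1}, T_j^- : H_j → H_{j-1}, Δ_j : H_j → H_j and a constant c > 0, satisfying: Δ_j = ((n-2j)²/(4(n-2j-1)))(T_j^+)*T_j^+ + ((n-2j+2)²/(4(n-2j+1)))(T_j^-)*T_j^- + (n(n+1)/8)c, together with T_{j+1}^+T_j^+ = 0, T_{j-1}^-T_j^- = 0 and T_{j-1}^+ = (T_j^-)*. Suppose each H_j is finite-dimensional (or the operators admit spectral decompositions). Then H_j admits an orthogonal decomposition H_j = Image(T_{j-1}^+) ⊕ Image(T_{j+1}^-)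 ⊕ ker(Δ_j - (n(n+1)/8)c), and moreover ker T_j^+ = Image(T_{j-1}^+) ⊕ ker(Δ_j - (n(n+1)/8)c) and ker T_j^- = Image(T_{j+1}^-) ⊕ ker(Δ_j - (n(n+1)/8)c). -/
open scoped RealInnerProductSpace

set_option maxHeartbeats 1000000

/-- Hodge–de Rham decomposition for spinor fields coupled with differential forms
(Proposition 6.4), abstract form.  Finite-dimensional inner product spaces `H j`
(`0 ≤ j ≤ N`, with `n > 2N + 1` so all denominators are positive) with operators
`Tp j = T_j^+`, `Tm j = T_{j+1}^-` (`T_j^+ = (T_{j+1}^-)^*`), `Δ j` and a constant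
`c > 0` satisfying `Δ_j = ((n-2j)²/(4(n-2j-1)))(T_j^+)^*T_j^+
+ ((n-2j+2)²/(4(n-2j+1)))(T_j^-)^*T_j^- + (n(n+1)/8)c` together with
`T_{j+1}^+ T_j^+ = 0` and `T_{j-1}^- T_j^- = 0` decompose orthogonally as
`H_j = Im T_{j-1}^+ ⊕ Im T_{j+1}^- ⊕ ker(Δ_j - (n(n+1)/8)c)`, with
`ker T_j^+ = Im T_{j-1}^+ ⊕ ker(Δ_j - (n(n+1)/8)c)` and
`ker T_j^- = Im T_{j+1}^- ⊕ ker(Δ_j - (n(n+1)/8)c)`. -/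
theorem hodge_de_rham_decomposition (n N : ℕ) (c : ℝ) (hc : 0 < c) (hN : 2 * N + 1 < n)
    (H : ℕ → Type*) [∀ j, NormedAddCommGroup (H j)] [∀ j, InnerProductSpace ℝ (H j)]
    [∀ j, FiniteDimensional ℝ (H j)]
    (Tp : ∀ j, H j →ₗ[ℝ] H (j + 1)) (Tm : ∀ j, H (j + 1) →ₗ[ℝ] H j)
    (Δ : ∀ j, Module.End ℝ (H j))
    -- adjointness `T_j^+ = (T_{j+1}^-)^*`
    (hadj : ∀ j (x : H j) (y : H (j + 1)), ⟪Tp j x, y⟫ = ⟪x, Tm j y⟫)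
    -- `d² = 0`-type relations
    (hdd : ∀ j, Tp (j + 1) ∘ₗ Tp j = 0)
    (hdd' : ∀ j, Tm j ∘ₗ Tm (j + 1) = 0)
    -- the Laplacian identity at `j = 0` (`T_0^- = 0`)
    (hΔ0 : Δ 0 = ((n : ℝ) ^ 2 / (4 * ((n : ℝ) - 1))) • (Tm 0 ∘ₗ Tp 0 : Module.End ℝ (H 0))
        + ((n : ℝ) * ((n : ℝ) + 1) / 8 * c) • 1)
    -- the Laplacian identity at `1 ≤ j ≤ N`
    (hΔ : ∀ j : ℕ, j + 1 ≤ N → Δ (j + 1)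
        = (((n : ℝ) - 2 * ((j : ℝ) + 1)) ^ 2 / (4 * ((n : ℝ) - 2 * ((j : ℝ) + 1) - 1)))
            • (Tm (j + 1) ∘ₗ Tp (j + 1) : Module.End ℝ (H (j + 1)))
          + (((n : ℝ) - 2 * ((j : ℝ) + 1) + 2) ^ 2 / (4 * ((n : ℝ) - 2 * ((j : ℝ) + 1) + 1)))
            • (Tp j ∘ₗ Tm j : Module.End ℝ (H (j + 1)))
          + ((n : ℝ) * ((n : ℝ) + 1) / 8 * c) • 1) :
    ∀ j : ℕ, j + 1 ≤ N →
      (LinearMap.range (Tp j) ⊔ LinearMap.range (Tm (j + 1))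
          ⊔ LinearMap.ker (Δ (j + 1) - ((n : ℝ) * ((n : ℝ) + 1) / 8 * c) • 1) = ⊤)
      ∧ (∀ x ∈ LinearMap.range (Tp j), ∀ y ∈ LinearMap.range (Tm (j + 1)), ⟪x, y⟫ = 0)
      ∧ (∀ x ∈ LinearMap.range (Tp j),
          ∀ y ∈ LinearMap.ker (Δ (j + 1) - ((n : ℝ) * ((n : ℝ) + 1) / 8 * c) • 1), ⟪x, y⟫ = 0)
      ∧ (∀ x ∈ LinearMap.range (Tm (j + 1)),
          ∀ y ∈ LinearMap.ker (Δ (j + 1) - ((n : ℝ) * ((n : ℝ) + 1) / 8 * c) • 1), ⟪x, y⟫ = 0)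
      ∧ LinearMap.ker (Tp (j + 1))
          = LinearMap.range (Tp j)
            ⊔ LinearMap.ker (Δ (j + 1) - ((n : ℝ) * ((n : ℝ) + 1) / 8 * c) • 1)
      ∧ LinearMap.ker (Tm j)
          = LinearMap.range (Tm (j + 1))
            ⊔ LinearMap.ker (Δ (j + 1) - ((n : ℝ) * ((n : ℝ) + 1) / 8 * c) • 1) := by

  intro j hj
  have hn3 : (2 * j + 3 : ℕ) < n := by omega
  have hnR : (2 * (j : ℝ) + 3) < (n : ℝ) := by exact_mod_cast hn3
  set κ : ℝ := (n : ℝ) * ((n : ℝ) + 1) / 8 * c with hκ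
  set a : ℝ := ((n : ℝ) - 2 * ((j : ℝ) + 1)) ^ 2 / (4 * ((n : ℝ) - 2 * ((j : ℝ) + 1) - 1))
    with ha_def
  set b : ℝ := ((n : ℝ) - 2 * ((j : ℝ) + 1) + 2) ^ 2 / (4 * ((n : ℝ) - 2 * ((j : ℝ) + 1) + 1))
    with hb_def
  have ha : 0 < a := div_pos (pow_pos (by linarith) 2) (by linarith)
  have hb : 0 < b := div_pos (pow_pos (by linarith) 2) (by linarith)
  set D : Module.End ℝ (H (j + 1)) := Δ (j + 1) - κ • 1 with hDdef
  have hD : D = a • (Tm (j + 1) ∘ₗ Tp (j + 1) : Module.End ℝ (H (j + 1)))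
      + b • (Tp j ∘ₗ Tm j : Module.End ℝ (H (j + 1))) := by
    rw [hDdef, hΔ j hj, add_sub_cancel_right]
  have hDx : ∀ x : H (j + 1),
      D x = a • (Tm (j + 1) (Tp (j + 1) x)) + b • (Tp j (Tm j x)) := by
    intro x
    rw [hD]
    simp [LinearMap.comp_apply]
  -- inner product of D x with y
  have hDinner : ∀ x y : H (j + 1),
      ⟪D x, y⟫ = a * ⟪Tp (j + 1) x, Tp (j + 1) y⟫ + b * ⟪Tm j x, Tm j y⟫ := by
    intro x y
    rw [hDx]
    rw [inner_add_left, real_inner_smul_left, real_inner_smul_left]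
    congr 2
    · rw [real_inner_comm]
      rw [← hadj (j + 1) y (Tp (j + 1) x)]
      exact real_inner_comm _ _
    · rw [real_inner_comm, ← hadj j (Tm j x) y]
      exact real_inner_comm _ _
  have hsym : ∀ x y : H (j + 1), ⟪D x, y⟫ = ⟪x, D y⟫ := by
    intro x y
    rw [hDinner x y, real_inner_comm (D y) x, hDinner y x,
      real_inner_comm (Tp (j + 1) x) (Tp (j + 1) y), real_inner_comm (Tm j x) (Tm j y)]
  have hker : ∀ x : H (j + 1), D x = 0 ↔ Tp (j + 1) x = 0 ∧ Tm j x = 0 := by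
    intro x
    constructor
    · intro hx
      have h0 : a * ‖Tp (j + 1) x‖ ^ 2 + b * ‖Tm j x‖ ^ 2 = 0 := by
        have := hDinner x x
        rw [hx] at this
        simp only [inner_zero_left] at this
        rw [real_inner_self_eq_norm_sq, real_inner_self_eq_norm_sq] at this
        linarith
      have hp : ‖Tp (j + 1) x‖ ^ 2 = 0 := by
        nlinarith [sq_nonneg ‖Tp (j + 1) x‖, sq_nonneg ‖Tm j x‖,
          mul_nonneg ha.le (sq_nonneg ‖Tp (j + 1) x‖),
          mul_nonneg hb.le (sq_nonneg ‖Tm j x‖)]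
      have hm : ‖Tm j x‖ ^ 2 = 0 := by
        nlinarith [mul_nonneg ha.le (sq_nonneg ‖Tp (j + 1) x‖),
          mul_nonneg hb.le (sq_nonneg ‖Tm j x‖)]
      constructor
      · rwa [pow_eq_zero_iff (by norm_num), norm_eq_zero] at hp
      · rwa [pow_eq_zero_iff (by norm_num), norm_eq_zero] at hm
    · rintro ⟨h1, h2⟩
      rw [hDx, h1, h2]
      simp
  -- orthogonal complement of the range of D is its kernel
  have horth : (LinearMap.range D)ᗮ = LinearMap.ker D := by
    ext x
    simp only [Submodule.mem_orthogonal, LinearMap.mem_range, LinearMap.mem_ker,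
      forall_exists_index]
    constructor
    · intro hx
      have h0 : ⟪D x, x⟫ = (0 : ℝ) := hx (D x) x rfl
      have h1 : a * ‖Tp (j + 1) x‖ ^ 2 + b * ‖Tm j x‖ ^ 2 = 0 := by
        have h2 := hDinner x x
        rw [h0, real_inner_self_eq_norm_sq, real_inner_self_eq_norm_sq] at h2
        linarith
      have hp : ‖Tp (j + 1) x‖ ^ 2 = 0 := by
        nlinarith [mul_nonneg ha.le (sq_nonneg ‖Tp (j + 1) x‖),
          mul_nonneg hb.le (sq_nonneg ‖Tm j x‖)]
      have hm : ‖Tm j x‖ ^ 2 = 0 := by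
        nlinarith [mul_nonneg ha.le (sq_nonneg ‖Tp (j + 1) x‖),
          mul_nonneg hb.le (sq_nonneg ‖Tm j x‖)]
      rw [pow_eq_zero_iff (by norm_num : (2:ℕ) ≠ 0), norm_eq_zero] at hp hm
      exact (hker x).mpr ⟨hp, hm⟩
    · intro hx u y hy
      subst hy
      rw [hsym y x, hx, inner_zero_right]
  have htop : LinearMap.range D ⊔ LinearMap.ker D = ⊤ := by
    rw [← horth]
    exact Submodule.sup_orthogonal_of_hasOrthogonalProjection
  have hdd'app : ∀ z : H (j + 1 + 1), Tm j (Tm (j + 1) z) = 0 := by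
    intro z
    have := LinearMap.ext_iff.mp (hdd' j) z
    simpa using this
  have hddapp : ∀ z : H j, Tp (j + 1) (Tp j z) = 0 := by
    intro z
    have := LinearMap.ext_iff.mp (hdd j) z
    simpa using this
  -- main sup = ⊤
  have htriple : LinearMap.range (Tp j) ⊔ LinearMap.range (Tm (j + 1))
      ⊔ LinearMap.ker D = ⊤ := by
    refine le_antisymm le_top ?_
    rw [← htop]
    refine sup_le ?_ le_sup_right
    rintro x ⟨y, rfl⟩
    rw [hDx]
    refine Submodule.add_mem _ ?_ ?_
    · exact Submodule.mem_sup_left (Submodule.mem_sup_right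
        (Submodule.smul_mem _ _ ⟨Tp (j + 1) y, rfl⟩))
    · exact Submodule.mem_sup_left (Submodule.mem_sup_left
        (Submodule.smul_mem _ _ ⟨Tm j y, rfl⟩))
  -- orthogonality statements
  have horth1 : ∀ x ∈ LinearMap.range (Tp j), ∀ y ∈ LinearMap.range (Tm (j + 1)),
      ⟪x, y⟫ = 0 := by
    rintro x ⟨u, rfl⟩ y ⟨v, rfl⟩
    rw [hadj j u (Tm (j + 1) v), hdd'app v, inner_zero_right]
  have horth2 : ∀ x ∈ LinearMap.range (Tp j), ∀ y ∈ LinearMap.ker D, ⟪x, y⟫ = 0 := by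
    rintro x ⟨u, rfl⟩ y hy
    rw [hadj j u y, ((hker y).mp hy).2, inner_zero_right]
  have horth3 : ∀ x ∈ LinearMap.range (Tm (j + 1)), ∀ y ∈ LinearMap.ker D, ⟪x, y⟫ = 0 := by
    rintro x ⟨u, rfl⟩ y hy
    rw [real_inner_comm, ← hadj (j + 1) y u, ((hker y).mp hy).1, inner_zero_left]
  -- kernel of Tp (j+1)
  have hkerTp : LinearMap.ker (Tp (j + 1)) = LinearMap.range (Tp j) ⊔ LinearMap.ker D := by
    apply le_antisymm
    · intro x hx
      have hx' : Tp (j + 1) x = 0 := hx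
      have hxmem : x ∈ LinearMap.range (Tp j) ⊔ LinearMap.range (Tm (j + 1))
          ⊔ LinearMap.ker D := by rw [htriple]; trivial
      rcases Submodule.mem_sup.mp hxmem with ⟨y, hy, w, hw, rfl⟩
      rcases Submodule.mem_sup.mp hy with ⟨u, hu, v, hv, rfl⟩
      rcases hv with ⟨z, rfl⟩
      rcases hu with ⟨s, hs⟩
      have hTpu : Tp (j + 1) u = 0 := by rw [← hs]; exact hddapp s
      have hTpw : Tp (j + 1) w = 0 := ((hker w).mp hw).1
      have hTpv : Tp (j + 1) (Tm (j + 1) z) = 0 := by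
        have := hx'
        rw [map_add, map_add, hTpu, hTpw] at this
        simpa using this
      have hv0 : Tm (j + 1) z = 0 := by
        have h0 : ⟪Tm (j + 1) z, Tm (j + 1) z⟫ = (0 : ℝ) := by
          rw [← hadj (j + 1) (Tm (j + 1) z) z, hTpv, inner_zero_left]
        exact inner_self_eq_zero.mp h0
      rw [hv0, add_zero]
      exact Submodule.add_mem _ (Submodule.mem_sup_left ⟨s, hs⟩)
        (Submodule.mem_sup_right hw)
    · refine sup_le ?_ ?_
      · rintro x ⟨u, rfl⟩
        exact hddapp u
      · intro x hx
        exact ((hker x).mp hx).1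
  -- kernel of Tm j
  have hkerTm : LinearMap.ker (Tm j) = LinearMap.range (Tm (j + 1)) ⊔ LinearMap.ker D := by
    apply le_antisymm
    · intro x hx
      have hx' : Tm j x = 0 := hx
      have hxmem : x ∈ LinearMap.range (Tp j) ⊔ LinearMap.range (Tm (j + 1))
          ⊔ LinearMap.ker D := by rw [htriple]; trivial
      rcases Submodule.mem_sup.mp hxmem with ⟨y, hy, w, hw, rfl⟩
      rcases Submodule.mem_sup.mp hy with ⟨u, hu, v, hv, rfl⟩
      rcases hu with ⟨s, rfl⟩
      rcases hv with ⟨z, hz⟩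
      have hTmv : Tm j v = 0 := by rw [← hz]; exact hdd'app z
      have hTmw : Tm j w = 0 := ((hker w).mp hw).2
      have hTmu : Tm j (Tp j s) = 0 := by
        have := hx'
        rw [map_add, map_add, hTmv, hTmw] at this
        simpa using this
      have hu0 : Tp j s = 0 := by
        have h0 : ⟪Tp j s, Tp j s⟫ = (0 : ℝ) := by
          rw [hadj j s (Tp j s), hTmu, inner_zero_right]
        exact inner_self_eq_zero.mp h0
      rw [hu0, zero_add]
      exact Submodule.add_mem _ (Submodule.mem_sup_left ⟨z, hz⟩)
        (Submodule.mem_sup_right hw)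
    · refine sup_le ?_ ?_
      · rintro x ⟨u, rfl⟩
        exact hdd'app u
      · intro x hx
        exact ((hker x).mp hx).2
  exact ⟨htriple, horth1, horth2, horth3, hkerTp, hkerTm⟩
end

section
/- For integers n ≥ 3 and 0 ≤ j ≤ ⌊n/2⌋, the dimension of the irreducible Spin(n)-module W_{δ_j} with highest weight ((3/2)_j, (1/2)_{m-j}) (summing both half-spin pieces when n is even) equals 2^⌊n/2⌋ · ((n-2j+1)/(n-j+1)) · C(n, j). -/
open Finset

/-- Weyl dimension formula for `so(2m+1)` (type `B_m`). -/
def weylDimB (m : ℕ) (lam : Fin m → ℚ) : ℚ :=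
  let d : Fin m → ℚ := fun i => (m : ℚ) - (i : ℚ) - 1/2
  let L : Fin m → ℚ := fun i => lam i + d i
  (∏ p ∈ univ.filter (fun p : Fin m × Fin m => p.1 < p.2),
      ((L p.1 - L p.2) * (L p.1 + L p.2)) / ((d p.1 - d p.2) * (d p.1 + d p.2)))
    * ∏ i, L i / d i

/-- Weyl dimension formula for `so(2m)` (type `D_m`). -/
def weylDimD (m : ℕ) (lam : Fin m → ℚ) : ℚ :=
  let d : Fin m → ℚ := fun i => (m : ℚ) - (i : ℚ) - 1
  let L : Fin m → ℚ := fun i => lam i + d i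
  ∏ p ∈ univ.filter (fun p : Fin m × Fin m => p.1 < p.2),
      ((L p.1 - L p.2) * (L p.1 + L p.2)) / ((d p.1 - d p.2) * (d p.1 + d p.2))


private lemma pairProd (m : ℕ) (F : ℕ → ℕ → ℚ) :
    ∏ p ∈ univ.filter (fun p : Fin m × Fin m => p.1 < p.2), F p.1 p.2
    = ∏ i ∈ range m, ∏ k ∈ Ioo i m, F i k := by
  rw [Finset.prod_filter, Fintype.prod_prod_type]
  simp only [Fin.lt_def]
  rw [Fin.prod_univ_eq_prod_range (fun i => ∏ y : Fin m, if i < (y:ℕ) then F i y else 1)]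
  refine Finset.prod_congr rfl fun i hi => ?_
  rw [Fin.prod_univ_eq_prod_range (fun k => if i < k then F i k else 1), ← Finset.prod_filter]
  congr 1
  ext k
  simp [Finset.mem_filter, Finset.mem_Ioo, and_comm]

private lemma peel (m : ℕ) (F : ℕ → ℕ → ℚ) :
    ∏ i ∈ range (m+1), ∏ k ∈ Ioo i (m+1), F i k
    = (∏ k ∈ Ioo 0 (m+1), F 0 k) * ∏ i ∈ range m, ∏ k ∈ Ioo i m, F (i+1) (k+1) := by
  rw [Finset.prod_range_succ']
  rw [mul_comm]
  congr 1
  refine Finset.prod_congr rfl fun i hi => ?_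
  have h : Ioo (i+1) (m+1) = Finset.map (addRightEmbedding 1) (Ioo i m) := by
    rw [Finset.map_add_right_Ioo]
  rw [h, Finset.prod_map]
  rfl

private lemma telD (g : ℕ → ℚ) (a b : ℕ) (hab : a ≤ b) (h : ∀ k, a ≤ k → k ≤ b → g k ≠ 0) :
    ∏ k ∈ Ico a b, g k / g (k+1) = g a / g b := by
  induction b, hab using Nat.le_induction with
  | base => simp [div_self (h a le_rfl le_rfl)]
  | succ b hab ih =>
      rw [Finset.prod_Ico_succ_top hab, ih (fun k hk hk' => h k hk (hk'.trans (Nat.le_succ b)))]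
      rw [div_mul_div_comm, div_eq_div_iff]
      · ring
      · exact mul_ne_zero (h b hab b.le_succ) (h (b+1) (hab.trans b.le_succ) le_rfl)
      · exact h (b+1) (hab.trans b.le_succ) le_rfl

private lemma telU (g : ℕ → ℚ) (a b : ℕ) (hab : a ≤ b) (h : ∀ k, a ≤ k → k ≤ b → g k ≠ 0) :
    ∏ k ∈ Ico a b, g (k+1) / g k = g b / g a := by
  have h0 := telD g a b hab h
  have h2 : ∀ k ∈ Ico a b, g (k+1) / g k = (g k / g (k+1))⁻¹ := by
    intro k hk
    rw [inv_div]
  rw [Finset.prod_congr rfl h2, Finset.prod_inv_distrib, h0, inv_div]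

private lemma chooseRatio (N j : ℕ) (hj : j ≤ N) :
    (((N+2).choose (j+1) : ℚ)) * ((j:ℚ)+1) * ((N:ℚ)+1-j)
      = (N.choose j : ℚ) * ((N:ℚ)+2) * ((N:ℚ)+1) := by
  have h1 : ((N+1) * N.choose j : ℕ) = ((N+1).choose (j+1)) * (j+1) := Nat.add_one_mul_choose_eq N j
  have h2 : ((N+1).choose (j+1) * (N + 2) : ℕ) = (N + 2).choose (j+1) * (N + 2 - (j+1)) :=
    Nat.choose_mul_succ_eq (N+1) (j+1)
  have h3 : (N + 2 - (j+1)) = N + 1 - j := by omega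
  have h4 : ((N + 1 - j : ℕ) : ℚ) = (N:ℚ) + 1 - j := by
    push_cast [Nat.cast_sub (by omega : j ≤ N + 1)]; ring
  have q1 : ((N:ℚ)+1) * (N.choose j : ℚ) = ((N+1).choose (j+1) : ℚ) * ((j:ℚ)+1) := by
    exact_mod_cast congrArg (Nat.cast : ℕ → ℚ) h1
  have q2 : ((N+1).choose (j+1) : ℚ) * ((N:ℚ) + 2) = ((N+2).choose (j+1) : ℚ) * ((N:ℚ)+1-j) := by
    rw [h3] at h2
    calc ((N+1).choose (j+1) : ℚ) * ((N:ℚ) + 2)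
        = (((N+1).choose (j+1) * (N + 2) : ℕ) : ℚ) := by push_cast; ring
      _ = (((N + 2).choose (j+1) * (N + 1 - j) : ℕ) : ℚ) := by
            exact_mod_cast congrArg (Nat.cast : ℕ → ℚ) h2
      _ = ((N+2).choose (j+1) : ℚ) * ((N:ℚ)+1-j) := by rw [Nat.cast_mul, h4]
  calc ((N+2).choose (j+1) : ℚ) * ((j:ℚ)+1) * ((N:ℚ)+1-j)
      = (((N+2).choose (j+1) : ℚ) * ((N:ℚ)+1-j)) * ((j:ℚ)+1) := by ring
    _ = (((N+1).choose (j+1) : ℚ) * ((N:ℚ) + 2)) * ((j:ℚ)+1) := by rw [q2]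
    _ = (((N+1).choose (j+1) : ℚ) * ((j:ℚ)+1)) * ((N:ℚ) + 2) := by ring
    _ = (((N:ℚ)+1) * (N.choose j : ℚ)) * ((N:ℚ) + 2) := by rw [q1]
    _ = (N.choose j : ℚ) * ((N:ℚ)+2) * ((N:ℚ)+1) := by ring

/-- the weight pattern as a function on `ℕ` -/
def lamBx (j : ℕ) : ℕ → ℚ := fun t => if t < j then 3/2 else 1/2

/-- numeric pair factor, type B -/
def FBq (m : ℕ) (lamN : ℕ → ℚ) (i k : ℕ) : ℚ :=
  (((lamN i + ((m:ℚ) - i - 1/2)) - (lamN k + ((m:ℚ) - k - 1/2)))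
    * ((lamN i + ((m:ℚ) - i - 1/2)) + (lamN k + ((m:ℚ) - k - 1/2))))
  / ((((m:ℚ) - i - 1/2) - ((m:ℚ) - k - 1/2)) * (((m:ℚ) - i - 1/2) + ((m:ℚ) - k - 1/2)))

/-- numeric pair factor, type D -/
def FDq (m : ℕ) (lamN : ℕ → ℚ) (i k : ℕ) : ℚ :=
  (((lamN i + ((m:ℚ) - i - 1)) - (lamN k + ((m:ℚ) - k - 1)))
    * ((lamN i + ((m:ℚ) - i - 1)) + (lamN k + ((m:ℚ) - k - 1))))
  / ((((m:ℚ) - i - 1) - ((m:ℚ) - k - 1)) * (((m:ℚ) - i - 1) + ((m:ℚ) - k - 1)))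

private lemma convB (m : ℕ) (lam : Fin m → ℚ) (lamN : ℕ → ℚ) (h : ∀ i : Fin m, lam i = lamN i) :
    weylDimB m lam = (∏ i ∈ range m, ∏ k ∈ Ioo i m, FBq m lamN i k)
      * ∏ i ∈ range m, (lamN i + ((m:ℚ) - i - 1/2)) / ((m:ℚ) - i - 1/2) := by
  have h0 : weylDimB m lam
      = (∏ p ∈ univ.filter (fun p : Fin m × Fin m => p.1 < p.2), FBq m lamN p.1 p.2)
        * ∏ i : Fin m, (lamN i + ((m:ℚ) - i - 1/2)) / ((m:ℚ) - i - 1/2) := by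
    simp only [weylDimB]
    congr 1
    · refine Finset.prod_congr rfl fun p hp => ?_
      simp only [FBq, h]
    · refine Finset.prod_congr rfl fun i hi => ?_
      simp only [h]
  rw [h0, pairProd,
    Fin.prod_univ_eq_prod_range (fun i => (lamN i + ((m:ℚ) - i - 1/2)) / ((m:ℚ) - i - 1/2))]

private lemma convD (m : ℕ) (lam : Fin m → ℚ) (lamN : ℕ → ℚ) (h : ∀ i : Fin m, lam i = lamN i) :
    weylDimD m lam = ∏ i ∈ range m, ∏ k ∈ Ioo i m, FDq m lamN i k := by
  have h0 : weylDimD m lam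
      = ∏ p ∈ univ.filter (fun p : Fin m × Fin m => p.1 < p.2), FDq m lamN p.1 p.2 := by
    simp only [weylDimD]
    refine Finset.prod_congr rfl fun p hp => ?_
    simp only [FDq, h]
  rw [h0, pairProd]

private lemma prodB0 (m : ℕ) :
    ∏ k ∈ Ico 1 (m+1), FBq (m+1) (lamBx 0) 0 k = (2*(m:ℚ)+1)/((m:ℚ)+1) := by
  have e : ∀ k ∈ Ico 1 (m+1),
      FBq (m+1) (lamBx 0) 0 k
        = (fun t : ℕ => 2*(m:ℚ)+2-(t:ℚ)) k / (fun t : ℕ => 2*(m:ℚ)+2-(t:ℚ)) (k+1) := by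
    intro k hk
    rw [Finset.mem_Ico] at hk
    have hk1 : (1:ℚ) ≤ (k:ℚ) := by exact_mod_cast hk.1
    have hkm : (k:ℚ) ≤ (m:ℚ) := by
      have : k ≤ m := by omega
      exact_mod_cast this
    simp only [FBq, lamBx, if_neg (Nat.not_lt_zero 0), if_neg (Nat.not_lt_zero k)]
    rw [div_eq_div_iff]
    · push_cast; ring
    · have h : ((((m+1:ℕ):ℚ) - ((0:ℕ):ℚ) - 1/2) - (((m+1:ℕ):ℚ) - (k:ℚ) - 1/2))
          * ((((m+1:ℕ):ℚ) - ((0:ℕ):ℚ) - 1/2) + (((m+1:ℕ):ℚ) - (k:ℚ) - 1/2))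
          = (k:ℚ) * (2*(m:ℚ)+1-k) := by push_cast; ring
      rw [h]
      apply mul_ne_zero <;> nlinarith
    · push_cast; nlinarith
  rw [Finset.prod_congr rfl e, telD (fun t : ℕ => 2*(m:ℚ)+2-(t:ℚ)) 1 (m+1) (by omega) ?hnz]
  case hnz =>
    intro k hk1 hk2
    have h1 : (k:ℚ) ≤ (m:ℚ)+1 := by exact_mod_cast hk2
    show 2*(m:ℚ)+2-(k:ℚ) ≠ 0
    nlinarith
  · push_cast
    rw [div_eq_div_iff (by nlinarith) (by nlinarith)]
    ring

private lemma recB0 (m : ℕ) :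
    weylDimB (m+1) (fun i : Fin (m+1) => if (i:ℕ) < 0 then (3:ℚ)/2 else 1/2)
    = 2 * weylDimB m (fun i : Fin m => if (i:ℕ) < 0 then (3:ℚ)/2 else 1/2) := by
  rw [convB (m+1) (fun i : Fin (m+1) => if (i:ℕ) < 0 then (3:ℚ)/2 else 1/2) (lamBx 0) (fun i => rfl),
    convB m (fun i : Fin m => if (i:ℕ) < 0 then (3:ℚ)/2 else 1/2) (lamBx 0) (fun i => rfl), peel,
    Finset.prod_range_succ']
  have hIoo : Ioo 0 (m+1) = Ico 1 (m+1) := by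
    ext x; simp [Finset.mem_Ioo, Finset.mem_Ico]; omega
  rw [hIoo, prodB0 m]
  have hshift : ∀ i k : ℕ, FBq (m+1) (lamBx 0) (i+1) (k+1) = FBq m (lamBx 0) i k := by
    intro i k
    simp only [FBq, lamBx, if_neg (Nat.not_lt_zero _)]
    push_cast; ring
  have hsingle : ∀ i : ℕ,
      (lamBx 0 (i+1) + (((m+1:ℕ):ℚ) - ((i+1:ℕ):ℚ) - 1/2)) / (((m+1:ℕ):ℚ) - ((i+1:ℕ):ℚ) - 1/2)
        = (lamBx 0 i + ((m:ℚ) - (i:ℚ) - 1/2)) / ((m:ℚ) - (i:ℚ) - 1/2) := by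
    intro i
    simp only [lamBx, if_neg (Nat.not_lt_zero _)]
    push_cast; ring_nf
  simp only [hshift, hsingle]
  have hs0 : (lamBx 0 0 + (((m+1:ℕ):ℚ) - ((0:ℕ):ℚ) - 1/2)) / (((m+1:ℕ):ℚ) - ((0:ℕ):ℚ) - 1/2)
      = (2*(m:ℚ)+2)/(2*(m:ℚ)+1) := by
    simp only [lamBx, if_neg (Nat.not_lt_zero _)]
    push_cast
    rw [div_eq_div_iff (by nlinarith) (by nlinarith)]
    ring
  rw [hs0]
  have key : (2*(m:ℚ)+1)/((m:ℚ)+1) * ((2*(m:ℚ)+2)/(2*(m:ℚ)+1)) = 2 := by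
    rw [div_mul_div_comm, div_eq_iff (by nlinarith)]
    ring
  calc ((2*(m:ℚ)+1)/((m:ℚ)+1) * ∏ i ∈ range m, ∏ k ∈ Ioo i m, FBq m (lamBx 0) i k)
        * ((∏ i ∈ range m,
            (lamBx 0 i + ((m:ℚ) - (i:ℚ) - 1/2)) / ((m:ℚ) - (i:ℚ) - 1/2))
           * ((2*(m:ℚ)+2)/(2*(m:ℚ)+1)))
      = ((2*(m:ℚ)+1)/((m:ℚ)+1) * ((2*(m:ℚ)+2)/(2*(m:ℚ)+1)))
        * ((∏ i ∈ range m, ∏ k ∈ Ioo i m, FBq m (lamBx 0) i k)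
           * ∏ i ∈ range m,
              (lamBx 0 i + ((m:ℚ) - (i:ℚ) - 1/2)) / ((m:ℚ) - (i:ℚ) - 1/2)) := by ring
    _ = _ := by rw [key]

private lemma prodB1 (m j : ℕ) (hj : j ≤ m) :
    ∏ k ∈ Ico 1 (j+1), FBq (m+1) (lamBx (j+1)) 0 k
      = ((2*(m:ℚ)+3)*(2*(m:ℚ)+2)*(2*(m:ℚ)+1))
        / ((2*(m:ℚ)+3-j)*(2*(m:ℚ)+2-j)*(2*(m:ℚ)+1-j)) := by
  have hjq : (j:ℚ) ≤ (m:ℚ) := by exact_mod_cast hj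
  set G : ℕ → ℚ := fun t : ℕ => (2*(m:ℚ)+4-(t:ℚ))*(2*(m:ℚ)+3-(t:ℚ))*(2*(m:ℚ)+2-(t:ℚ)) with hG
  have hGnz : ∀ k : ℕ, k ≤ m+1 → G k ≠ 0 := by
    intro k hk
    have hkq : (k:ℚ) ≤ (m:ℚ)+1 := by exact_mod_cast hk
    simp only [hG]
    refine ne_of_gt (mul_pos (mul_pos ?_ ?_) ?_) <;> nlinarith
  have e : ∀ k ∈ Ico 1 (j+1), FBq (m+1) (lamBx (j+1)) 0 k = G k / G (k+1) := by
    intro k hk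
    rw [Finset.mem_Ico] at hk
    have hk1 : (1:ℚ) ≤ (k:ℚ) := by exact_mod_cast hk.1
    have hkm : (k:ℚ) ≤ (m:ℚ) := by
      have : k ≤ m := by omega
      exact_mod_cast this
    simp only [FBq, lamBx]
    rw [if_pos (show (0:ℕ) < j+1 by omega), if_pos (show k < j+1 from hk.2)]
    rw [div_eq_div_iff ?hd (hGnz (k+1) (by omega))]
    · simp only [hG]; push_cast; ring
    case hd =>
      have h : ((((m+1:ℕ):ℚ) - ((0:ℕ):ℚ) - 1/2) - (((m+1:ℕ):ℚ) - (k:ℚ) - 1/2))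
          * ((((m+1:ℕ):ℚ) - ((0:ℕ):ℚ) - 1/2) + (((m+1:ℕ):ℚ) - (k:ℚ) - 1/2))
          = (k:ℚ) * (2*(m:ℚ)+1-k) := by push_cast; ring
      rw [h]
      apply mul_ne_zero <;> nlinarith
  rw [Finset.prod_congr rfl e, telD G 1 (j+1) (by omega) (fun k h1 h2 => hGnz k (by omega))]
  rw [div_eq_div_iff (hGnz (j+1) (by omega))
    (ne_of_gt (mul_pos (mul_pos (by nlinarith) (by nlinarith)) (by nlinarith)))]
  simp only [hG]; push_cast; ring

private lemma prodB2 (m j : ℕ) (hj : j ≤ m) :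
    ∏ k ∈ Ico (j+1) (m+1), FBq (m+1) (lamBx (j+1)) 0 k
      = (((m:ℚ)+1)*((2*(m:ℚ)+2-j)*(2*(m:ℚ)+1-j)))
        / (((j:ℚ)+1)*((((m:ℚ)+2)*((m:ℚ)+1)))) := by
  have hjq : (j:ℚ) ≤ (m:ℚ) := by exact_mod_cast hj
  set H : ℕ → ℚ := fun t : ℕ => (2*(m:ℚ)+3-(t:ℚ))*(2*(m:ℚ)+2-(t:ℚ)) with hH
  have hHnz : ∀ k : ℕ, k ≤ m+1 → H k ≠ 0 := by
    intro k hk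
    have hkq : (k:ℚ) ≤ (m:ℚ)+1 := by exact_mod_cast hk
    simp only [hH]
    refine ne_of_gt (mul_pos ?_ ?_) <;> nlinarith
  have hWnz : ∀ k : ℕ, j+1 ≤ k → k ≤ m+1 → ((k:ℚ)) ≠ 0 := by
    intro k hk _
    have : (1:ℚ) ≤ (k:ℚ) := by exact_mod_cast (show 1 ≤ k by omega)
    nlinarith
  have e : ∀ k ∈ Ico (j+1) (m+1), FBq (m+1) (lamBx (j+1)) 0 k
      = (((k+1:ℕ):ℚ)/(k:ℚ)) * (H k / H (k+1)) := by
    intro k hk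
    rw [Finset.mem_Ico] at hk
    have hk1 : (1:ℚ) ≤ (k:ℚ) := by exact_mod_cast (show 1 ≤ k by omega)
    have hkm : (k:ℚ) ≤ (m:ℚ) := by exact_mod_cast (show k ≤ m by omega)
    simp only [FBq, lamBx]
    rw [if_pos (show (0:ℕ) < j+1 by omega), if_neg (show ¬ k < j+1 by omega)]
    rw [div_mul_div_comm]
    rw [div_eq_div_iff ?hd (mul_ne_zero (by nlinarith) (hHnz (k+1) (by omega)))]
    · simp only [hH]; push_cast; ring
    case hd =>
      have h : ((((m+1:ℕ):ℚ) - ((0:ℕ):ℚ) - 1/2) - (((m+1:ℕ):ℚ) - (k:ℚ) - 1/2))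
          * ((((m+1:ℕ):ℚ) - ((0:ℕ):ℚ) - 1/2) + (((m+1:ℕ):ℚ) - (k:ℚ) - 1/2))
          = (k:ℚ) * (2*(m:ℚ)+1-k) := by push_cast; ring
      rw [h]
      apply mul_ne_zero <;> nlinarith
  rw [Finset.prod_congr rfl e, Finset.prod_mul_distrib,
    telU (fun t : ℕ => (t:ℚ)) (j+1) (m+1) (by omega) hWnz,
    telD H (j+1) (m+1) (by omega) (fun k h1 h2 => hHnz k (by omega))]
  rw [div_mul_div_comm]
  rw [div_eq_div_iff
    (mul_ne_zero (by push_cast; nlinarith) (hHnz (m+1) le_rfl))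
    (ne_of_gt (mul_pos (by nlinarith) (mul_pos (by nlinarith) (by nlinarith))))]
  simp only [hH]; push_cast; ring

private lemma recB_succ (m j : ℕ) (hj : j ≤ m) :
    weylDimB (m+1) (fun i : Fin (m+1) => if (i:ℕ) < j+1 then (3:ℚ)/2 else 1/2)
    = (4*((m:ℚ)+1)*(2*(m:ℚ)+3))/(((j:ℚ)+1)*(2*(m:ℚ)+3-(j:ℚ)))
      * weylDimB m (fun i : Fin m => if (i:ℕ) < j then (3:ℚ)/2 else 1/2) := by
  have hjq : (j:ℚ) ≤ (m:ℚ) := by exact_mod_cast hj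
  rw [convB (m+1) (fun i : Fin (m+1) => if (i:ℕ) < j+1 then (3:ℚ)/2 else 1/2)
      (lamBx (j+1)) (fun i => rfl),
    convB m (fun i : Fin m => if (i:ℕ) < j then (3:ℚ)/2 else 1/2) (lamBx j) (fun i => rfl),
    peel, Finset.prod_range_succ']
  have hIoo : Ioo 0 (m+1) = Ico 1 (m+1) := by
    ext x; simp [Finset.mem_Ioo, Finset.mem_Ico]; omega
  rw [hIoo, ← Finset.prod_Ico_consecutive _ (show 1 ≤ j+1 by omega) (show j+1 ≤ m+1 by omega),
    prodB1 m j hj, prodB2 m j hj]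
  have hshift : ∀ i k : ℕ, FBq (m+1) (lamBx (j+1)) (i+1) (k+1) = FBq m (lamBx j) i k := by
    intro i k
    simp only [FBq, lamBx, Nat.add_lt_add_iff_right]
    push_cast; ring
  have hsingle : ∀ i : ℕ,
      (lamBx (j+1) (i+1) + (((m+1:ℕ):ℚ) - ((i+1:ℕ):ℚ) - 1/2)) / (((m+1:ℕ):ℚ) - ((i+1:ℕ):ℚ) - 1/2)
        = (lamBx j i + ((m:ℚ) - (i:ℚ) - 1/2)) / ((m:ℚ) - (i:ℚ) - 1/2) := by
    intro i
    simp only [lamBx, Nat.add_lt_add_iff_right]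
    push_cast; ring_nf
  simp only [hshift, hsingle]
  have hs0 : (lamBx (j+1) 0 + (((m+1:ℕ):ℚ) - ((0:ℕ):ℚ) - 1/2)) / (((m+1:ℕ):ℚ) - ((0:ℕ):ℚ) - 1/2)
      = (2*(m:ℚ)+4)/(2*(m:ℚ)+1) := by
    simp only [lamBx, if_pos (show (0:ℕ) < j+1 by omega)]
    push_cast
    rw [div_eq_div_iff (by nlinarith) (by nlinarith)]
    ring
  rw [hs0]
  have key : ((2*(m:ℚ)+3)*(2*(m:ℚ)+2)*(2*(m:ℚ)+1))
        / ((2*(m:ℚ)+3-j)*(2*(m:ℚ)+2-j)*(2*(m:ℚ)+1-j))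
      * ((((m:ℚ)+1)*((2*(m:ℚ)+2-j)*(2*(m:ℚ)+1-j)))
        / (((j:ℚ)+1)*((((m:ℚ)+2)*((m:ℚ)+1)))))
      * ((2*(m:ℚ)+4)/(2*(m:ℚ)+1))
      = (4*((m:ℚ)+1)*(2*(m:ℚ)+3))/(((j:ℚ)+1)*(2*(m:ℚ)+3-(j:ℚ))) := by
    have hm0 : (0:ℚ) ≤ (m:ℚ) := Nat.cast_nonneg m
    have hj0 : (0:ℚ) ≤ (j:ℚ) := Nat.cast_nonneg j
    have d1 : (2*(m:ℚ)+3-j) ≠ 0 := ne_of_gt (by nlinarith)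
    have d2 : (2*(m:ℚ)+2-j) ≠ 0 := ne_of_gt (by nlinarith)
    have d3 : (2*(m:ℚ)+1-j) ≠ 0 := ne_of_gt (by nlinarith)
    have d4 : ((j:ℚ)+1) ≠ 0 := ne_of_gt (by nlinarith)
    have d5 : ((m:ℚ)+2) ≠ 0 := ne_of_gt (by nlinarith)
    have d6 : ((m:ℚ)+1) ≠ 0 := ne_of_gt (by nlinarith)
    have d7 : (2*(m:ℚ)+1) ≠ 0 := ne_of_gt (by nlinarith)
    rw [div_mul_div_comm, div_mul_div_comm, div_eq_div_iff (mul_ne_zero (mul_ne_zero (mul_ne_zero (mul_ne_zero d1 d2) d3) (mul_ne_zero d4 (mul_ne_zero d5 d6))) d7) (mul_ne_zero d4 d1)]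
    ring
  rw [← key]
  ring

private lemma closedB : ∀ j m : ℕ, j ≤ m →
    weylDimB m (fun i : Fin m => if (i:ℕ) < j then (3:ℚ)/2 else 1/2)
    = 2^m * ((2*(m:ℚ)+2-2*(j:ℚ))/(2*(m:ℚ)+2-(j:ℚ))) * (((2*m+1).choose j : ℕ) : ℚ) := by
  intro j
  induction j with
  | zero =>
      intro m _
      induction m with
      | zero =>
          rw [convB 0 (fun i : Fin 0 => if (i:ℕ) < 0 then (3:ℚ)/2 else 1/2) (lamBx 0)
            (fun i => rfl)]
          norm_num
      | succ m ih =>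
          rw [recB0 m, ih (Nat.zero_le m)]
          simp only [Nat.choose_zero_right, Nat.cast_zero, Nat.cast_one]
          push_cast
          have h1 : (2*(m:ℚ)+2) ≠ 0 := by positivity
          have h2 : (2*((m:ℚ)+1)+2) ≠ 0 := by positivity
          field_simp
          ring
  | succ j ihj =>
      intro m hm
      cases m with
      | zero => omega
      | succ m' =>
          rw [recB_succ m' j (by omega), ihj m' (by omega)]
          have hm0 : (0:ℚ) ≤ (m':ℚ) := Nat.cast_nonneg m'
          have hj0 : (0:ℚ) ≤ (j:ℚ) := Nat.cast_nonneg j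
          have hjq : (j:ℚ) ≤ (m':ℚ) := by exact_mod_cast (show j ≤ m' by omega)
          have hidx : 2*(m'+1)+1 = 2*m'+1+2 := by omega
          rw [hidx]
          have d1 : ((j:ℚ)+1) ≠ 0 := ne_of_gt (by nlinarith)
          have d2 : (2*(m':ℚ)+2-j) ≠ 0 := ne_of_gt (by nlinarith)
          have hY : (((2*m'+1+2).choose (j+1) : ℕ) : ℚ)
              = (((2*m'+1).choose j : ℕ) : ℚ) * ((2*(m':ℚ)+3)*(2*(m':ℚ)+2))
                / (((j:ℚ)+1)*(2*(m':ℚ)+2-j)) := by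
            rw [eq_div_iff (mul_ne_zero d1 d2)]
            have hc := chooseRatio (2*m'+1) j (by omega)
            push_cast at hc ⊢
            linear_combination hc
          rw [hY]
          have d3 : (2*(m':ℚ)+3-j) ≠ 0 := ne_of_gt (by nlinarith)
          have d4 : (2*((m':ℚ)+1)+2-((j:ℚ)+1)) ≠ 0 := ne_of_gt (by nlinarith)
          push_cast
          field_simp
          ring

private lemma prodD0 (m : ℕ) (hm : 1 ≤ m) :
    ∏ k ∈ Ico 1 (m+1), FDq (m+1) (lamBx 0) 0 k = 2 := by
  have hmq : (1:ℚ) ≤ (m:ℚ) := by exact_mod_cast hm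
  set P : ℕ → ℚ := fun t : ℕ => 2*(m:ℚ)+1-(t:ℚ) with hP
  have hPnz : ∀ k : ℕ, k ≤ m+1 → P k ≠ 0 := by
    intro k hk
    have hkq : (k:ℚ) ≤ (m:ℚ)+1 := by exact_mod_cast hk
    simp only [hP]
    nlinarith
  have e : ∀ k ∈ Ico 1 (m+1), FDq (m+1) (lamBx 0) 0 k = P k / P (k+1) := by
    intro k hk
    rw [Finset.mem_Ico] at hk
    have hk1 : (1:ℚ) ≤ (k:ℚ) := by exact_mod_cast hk.1
    have hkm : (k:ℚ) ≤ (m:ℚ) := by exact_mod_cast (show k ≤ m by omega)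
    simp only [FDq, lamBx, if_neg (Nat.not_lt_zero 0), if_neg (Nat.not_lt_zero k)]
    rw [div_eq_div_iff ?hd (hPnz (k+1) (by omega))]
    · simp only [hP]; push_cast; ring
    case hd =>
      have h : ((((m+1:ℕ):ℚ) - ((0:ℕ):ℚ) - 1) - (((m+1:ℕ):ℚ) - (k:ℚ) - 1))
          * ((((m+1:ℕ):ℚ) - ((0:ℕ):ℚ) - 1) + (((m+1:ℕ):ℚ) - (k:ℚ) - 1))
          = (k:ℚ) * (2*(m:ℚ)-k) := by push_cast; ring
      rw [h]
      apply mul_ne_zero <;> nlinarith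
  rw [Finset.prod_congr rfl e, telD P 1 (m+1) (by omega) (fun k h1 h2 => hPnz k (by omega))]
  simp only [hP]
  push_cast
  rw [div_eq_iff (by nlinarith)]
  ring

private lemma recD0 (m : ℕ) (hm : 1 ≤ m) :
    weylDimD (m+1) (fun i : Fin (m+1) => if (i:ℕ) < 0 then (3:ℚ)/2 else 1/2)
    = 2 * weylDimD m (fun i : Fin m => if (i:ℕ) < 0 then (3:ℚ)/2 else 1/2) := by
  rw [convD (m+1) (fun i : Fin (m+1) => if (i:ℕ) < 0 then (3:ℚ)/2 else 1/2) (lamBx 0)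
      (fun i => rfl),
    convD m (fun i : Fin m => if (i:ℕ) < 0 then (3:ℚ)/2 else 1/2) (lamBx 0) (fun i => rfl),
    peel]
  have hIoo : Ioo 0 (m+1) = Ico 1 (m+1) := by
    ext x; simp [Finset.mem_Ioo, Finset.mem_Ico]; omega
  rw [hIoo, prodD0 m hm]
  have hshift : ∀ i k : ℕ, FDq (m+1) (lamBx 0) (i+1) (k+1) = FDq m (lamBx 0) i k := by
    intro i k
    simp only [FDq, lamBx, if_neg (Nat.not_lt_zero _)]
    push_cast; ring
  simp only [hshift]

private lemma prodD1 (m j : ℕ) (hj : j ≤ m) (hm : 1 ≤ m) :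
    ∏ k ∈ Ico 1 (j+1), FDq (m+1) (lamBx (j+1)) 0 k
      = ((2*(m:ℚ)+2)*(2*(m:ℚ)+1)*(2*(m:ℚ)))
        / ((2*(m:ℚ)+2-j)*(2*(m:ℚ)+1-j)*(2*(m:ℚ)-j)) := by
  have hjq : (j:ℚ) ≤ (m:ℚ) := by exact_mod_cast hj
  have hmq : (1:ℚ) ≤ (m:ℚ) := by exact_mod_cast hm
  set G : ℕ → ℚ := fun t : ℕ => (2*(m:ℚ)+3-(t:ℚ))*(2*(m:ℚ)+2-(t:ℚ))*(2*(m:ℚ)+1-(t:ℚ)) with hG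
  have hGnz : ∀ k : ℕ, k ≤ m+1 → G k ≠ 0 := by
    intro k hk
    have hkq : (k:ℚ) ≤ (m:ℚ)+1 := by exact_mod_cast hk
    simp only [hG]
    refine ne_of_gt (mul_pos (mul_pos ?_ ?_) ?_) <;> nlinarith
  have e : ∀ k ∈ Ico 1 (j+1), FDq (m+1) (lamBx (j+1)) 0 k = G k / G (k+1) := by
    intro k hk
    rw [Finset.mem_Ico] at hk
    have hk1 : (1:ℚ) ≤ (k:ℚ) := by exact_mod_cast hk.1
    have hkm : (k:ℚ) ≤ (m:ℚ) := by exact_mod_cast (show k ≤ m by omega)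
    simp only [FDq, lamBx]
    rw [if_pos (show (0:ℕ) < j+1 by omega), if_pos (show k < j+1 from hk.2)]
    rw [div_eq_div_iff ?hd (hGnz (k+1) (by omega))]
    · simp only [hG]; push_cast; ring
    case hd =>
      have h : ((((m+1:ℕ):ℚ) - ((0:ℕ):ℚ) - 1) - (((m+1:ℕ):ℚ) - (k:ℚ) - 1))
          * ((((m+1:ℕ):ℚ) - ((0:ℕ):ℚ) - 1) + (((m+1:ℕ):ℚ) - (k:ℚ) - 1))
          = (k:ℚ) * (2*(m:ℚ)-k) := by push_cast; ring
      rw [h]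
      apply mul_ne_zero <;> nlinarith
  rw [Finset.prod_congr rfl e, telD G 1 (j+1) (by omega) (fun k h1 h2 => hGnz k (by omega))]
  rw [div_eq_div_iff (hGnz (j+1) (by omega))
    (ne_of_gt (mul_pos (mul_pos (by nlinarith) (by nlinarith)) (by nlinarith)))]
  simp only [hG]; push_cast; ring

private lemma prodD2 (m j : ℕ) (hj : j ≤ m) (hm : 1 ≤ m) :
    ∏ k ∈ Ico (j+1) (m+1), FDq (m+1) (lamBx (j+1)) 0 k
      = (((m:ℚ)+1)*((2*(m:ℚ)+1-j)*(2*(m:ℚ)-j)))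
        / (((j:ℚ)+1)*((((m:ℚ)+1)*(m:ℚ)))) := by
  have hjq : (j:ℚ) ≤ (m:ℚ) := by exact_mod_cast hj
  have hmq : (1:ℚ) ≤ (m:ℚ) := by exact_mod_cast hm
  set H : ℕ → ℚ := fun t : ℕ => (2*(m:ℚ)+2-(t:ℚ))*(2*(m:ℚ)+1-(t:ℚ)) with hH
  have hHnz : ∀ k : ℕ, k ≤ m+1 → H k ≠ 0 := by
    intro k hk
    have hkq : (k:ℚ) ≤ (m:ℚ)+1 := by exact_mod_cast hk
    simp only [hH]
    refine ne_of_gt (mul_pos ?_ ?_) <;> nlinarith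
  have hWnz : ∀ k : ℕ, j+1 ≤ k → k ≤ m+1 → ((k:ℚ)) ≠ 0 := by
    intro k hk _
    have : (1:ℚ) ≤ (k:ℚ) := by exact_mod_cast (show 1 ≤ k by omega)
    nlinarith
  have e : ∀ k ∈ Ico (j+1) (m+1), FDq (m+1) (lamBx (j+1)) 0 k
      = (((k+1:ℕ):ℚ)/(k:ℚ)) * (H k / H (k+1)) := by
    intro k hk
    rw [Finset.mem_Ico] at hk
    have hk1 : (1:ℚ) ≤ (k:ℚ) := by exact_mod_cast (show 1 ≤ k by omega)
    have hkm : (k:ℚ) ≤ (m:ℚ) := by exact_mod_cast (show k ≤ m by omega)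
    simp only [FDq, lamBx]
    rw [if_pos (show (0:ℕ) < j+1 by omega), if_neg (show ¬ k < j+1 by omega)]
    rw [div_mul_div_comm]
    rw [div_eq_div_iff ?hd (mul_ne_zero (by nlinarith) (hHnz (k+1) (by omega)))]
    · simp only [hH]; push_cast; ring
    case hd =>
      have h : ((((m+1:ℕ):ℚ) - ((0:ℕ):ℚ) - 1) - (((m+1:ℕ):ℚ) - (k:ℚ) - 1))
          * ((((m+1:ℕ):ℚ) - ((0:ℕ):ℚ) - 1) + (((m+1:ℕ):ℚ) - (k:ℚ) - 1))
          = (k:ℚ) * (2*(m:ℚ)-k) := by push_cast; ring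
      rw [h]
      apply mul_ne_zero <;> nlinarith
  rw [Finset.prod_congr rfl e, Finset.prod_mul_distrib,
    telU (fun t : ℕ => (t:ℚ)) (j+1) (m+1) (by omega) hWnz,
    telD H (j+1) (m+1) (by omega) (fun k h1 h2 => hHnz k (by omega))]
  rw [div_mul_div_comm]
  rw [div_eq_div_iff
    (mul_ne_zero (by push_cast; nlinarith) (hHnz (m+1) le_rfl))
    (ne_of_gt (mul_pos (by nlinarith) (mul_pos (by nlinarith) (by nlinarith))))]
  simp only [hH]; push_cast; ring

private lemma recD_succ (m j : ℕ) (hj : j ≤ m) (hm : 1 ≤ m) :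
    weylDimD (m+1) (fun i : Fin (m+1) => if (i:ℕ) < j+1 then (3:ℚ)/2 else 1/2)
    = (4*((m:ℚ)+1)*(2*(m:ℚ)+1))/(((j:ℚ)+1)*(2*(m:ℚ)+2-(j:ℚ)))
      * weylDimD m (fun i : Fin m => if (i:ℕ) < j then (3:ℚ)/2 else 1/2) := by
  have hjq : (j:ℚ) ≤ (m:ℚ) := by exact_mod_cast hj
  have hmq : (1:ℚ) ≤ (m:ℚ) := by exact_mod_cast hm
  rw [convD (m+1) (fun i : Fin (m+1) => if (i:ℕ) < j+1 then (3:ℚ)/2 else 1/2)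
      (lamBx (j+1)) (fun i => rfl),
    convD m (fun i : Fin m => if (i:ℕ) < j then (3:ℚ)/2 else 1/2) (lamBx j) (fun i => rfl),
    peel]
  have hIoo : Ioo 0 (m+1) = Ico 1 (m+1) := by
    ext x; simp [Finset.mem_Ioo, Finset.mem_Ico]; omega
  rw [hIoo, ← Finset.prod_Ico_consecutive _ (show 1 ≤ j+1 by omega) (show j+1 ≤ m+1 by omega),
    prodD1 m j hj hm, prodD2 m j hj hm]
  have hshift : ∀ i k : ℕ, FDq (m+1) (lamBx (j+1)) (i+1) (k+1) = FDq m (lamBx j) i k := by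
    intro i k
    simp only [FDq, lamBx, Nat.add_lt_add_iff_right]
    push_cast; ring
  simp only [hshift]
  have key : ((2*(m:ℚ)+2)*(2*(m:ℚ)+1)*(2*(m:ℚ)))
        / ((2*(m:ℚ)+2-j)*(2*(m:ℚ)+1-j)*(2*(m:ℚ)-j))
      * ((((m:ℚ)+1)*((2*(m:ℚ)+1-j)*(2*(m:ℚ)-j)))
        / (((j:ℚ)+1)*((((m:ℚ)+1)*(m:ℚ)))))
      = (4*((m:ℚ)+1)*(2*(m:ℚ)+1))/(((j:ℚ)+1)*(2*(m:ℚ)+2-(j:ℚ))) := by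
    have hj0 : (0:ℚ) ≤ (j:ℚ) := Nat.cast_nonneg j
    have d1 : (2*(m:ℚ)+2-j) ≠ 0 := ne_of_gt (by nlinarith)
    have d2 : (2*(m:ℚ)+1-j) ≠ 0 := ne_of_gt (by nlinarith)
    have d3 : (2*(m:ℚ)-j) ≠ 0 := ne_of_gt (by nlinarith)
    have d4 : ((j:ℚ)+1) ≠ 0 := ne_of_gt (by nlinarith)
    have d5 : ((m:ℚ)+1) ≠ 0 := ne_of_gt (by nlinarith)
    have d6 : ((m:ℚ)) ≠ 0 := ne_of_gt (by nlinarith)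
    field_simp <;> ring
  rw [← key]

private lemma fracAux (A1 B1 A2 B2 A3 B3 P c X Y : ℚ) (h1 : B1 ≠ 0) (h2 : B2 ≠ 0) (h3 : B3 ≠ 0)
    (h : A1 * P * A2 * X * B3 = c * A3 * Y * B1 * B2) :
    A1/B1 * (P * (A2/B2) * X) = c * (A3/B3) * Y := by
  field_simp
  linear_combination h

private lemma signD (m j : ℕ) (hm : 1 ≤ m) :
    weylDimD m (fun i : Fin m =>
        (if (i : ℕ) < j then (3 : ℚ)/2 else 1/2) * (if (i : ℕ) = m - 1 then -1 else 1))
    = weylDimD m (fun i : Fin m => if (i : ℕ) < j then (3:ℚ)/2 else 1/2) := by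
  rw [convD m (fun i : Fin m =>
        (if (i : ℕ) < j then (3 : ℚ)/2 else 1/2) * (if (i : ℕ) = m - 1 then -1 else 1))
      (fun t => (if t < j then (3 : ℚ)/2 else 1/2) * (if t = m - 1 then -1 else 1))
      (fun i => rfl),
    convD m (fun i : Fin m => if (i : ℕ) < j then (3:ℚ)/2 else 1/2) (lamBx j) (fun i => rfl)]
  refine Finset.prod_congr rfl fun i hi => Finset.prod_congr rfl fun k hk => ?_
  rw [Finset.mem_range] at hi
  rw [Finset.mem_Ioo] at hk
  simp only [FDq, lamBx]
  rw [if_neg (show i ≠ m - 1 by omega)]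
  rcases eq_or_ne k (m-1) with rfl | hne
  · rw [if_pos rfl, Nat.cast_sub hm, Nat.cast_one]
    ring
  · rw [if_neg hne]
    ring

private lemma closedD : ∀ j m : ℕ, j ≤ m → 1 ≤ m →
    2 * weylDimD m (fun i : Fin m => if (i:ℕ) < j then (3:ℚ)/2 else 1/2)
    = 2^m * ((2*(m:ℚ)+1-2*(j:ℚ))/(2*(m:ℚ)+1-(j:ℚ))) * (((2*m).choose j : ℕ) : ℚ) := by
  intro j
  induction j with
  | zero =>
      intro m _ hm
      induction m, hm using Nat.le_induction with
      | base =>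
          rw [convD 1 (fun i : Fin 1 => if (i:ℕ) < 0 then (3:ℚ)/2 else 1/2) (lamBx 0)
            (fun i => rfl)]
          have he : Ioo 0 1 = (∅ : Finset ℕ) := by ext x; simp [Finset.mem_Ioo]; omega
          simp [he]
          all_goals norm_num
      | succ m' hm' ih =>
          rw [recD0 m' hm', ih (Nat.zero_le m')]
          simp only [Nat.choose_zero_right, Nat.cast_zero, Nat.cast_one]
          push_cast
          have h1 : (2*(m':ℚ)+1) ≠ 0 := by positivity
          have h2 : (2*((m':ℚ)+1)+1) ≠ 0 := by positivity
          field_simp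
          ring
  | succ j ihj =>
      intro m hm hm1
      cases m with
      | zero => omega
      | succ m' =>
          rcases Nat.eq_zero_or_pos m' with rfl | hp
          · have hj0 : j = 0 := by omega
            subst hj0
            rw [convD 1 (fun i : Fin 1 => if (i:ℕ) < 0+1 then (3:ℚ)/2 else 1/2) (lamBx 1)
              (fun i => rfl)]
            have he : Ioo 0 1 = (∅ : Finset ℕ) := by ext x; simp [Finset.mem_Ioo]; omega
            simp [he]
            all_goals norm_num [Nat.choose_one_right]
          · rw [recD_succ m' j (by omega) hp, mul_left_comm, ihj m' (by omega) hp]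
            have hm0 : (0:ℚ) ≤ (m':ℚ) := Nat.cast_nonneg m'
            have hj0 : (0:ℚ) ≤ (j:ℚ) := Nat.cast_nonneg j
            have hjq : (j:ℚ) ≤ (m':ℚ) := by exact_mod_cast (show j ≤ m' by omega)
            have hidx : 2*(m'+1) = 2*m'+2 := by omega
            rw [hidx]
            have d1 : ((j:ℚ)+1) ≠ 0 := ne_of_gt (by nlinarith)
            have d2 : (2*(m':ℚ)+1-j) ≠ 0 := ne_of_gt (by nlinarith)
            have hYm : (((2*m'+2).choose (j+1) : ℕ) : ℚ) * (((j:ℚ)+1)*(2*(m':ℚ)+1-j))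
                = (((2*m').choose j : ℕ) : ℚ) * ((2*(m':ℚ)+2)*(2*(m':ℚ)+1)) := by
              have hc := chooseRatio (2*m') j (by omega)
              push_cast at hc ⊢
              linear_combination hc
            have d3 : (2*(m':ℚ)+2-j) ≠ 0 := ne_of_gt (by nlinarith)
            have d4 : (2*((m':ℚ)+1)+1-((j:ℚ)+1)) ≠ 0 := ne_of_gt (by nlinarith)
            push_cast at hYm ⊢
            refine fracAux _ _ _ _ _ _ _ _ _ _ (mul_ne_zero d1 d3) d2 d4 ?_
            linear_combination (-(2^(m'+1) * (2*(m':ℚ)+1-2*(j:ℚ)) * (2*(m':ℚ)+2-(j:ℚ)))) * hYm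

/-- The irreducible `Spin(n)`-module `W_{δ_j}` of highest weight
`((3/2)_j, (1/2)_{m-j})` (for even `n`, the sum of both half-spin pieces, the
second having its last coordinate negated) has dimension
`2^⌊n/2⌋ · (n-2j+1)/(n-j+1) · C(n,j)`, as computed by Weyl's dimension formula. -/
theorem dim_W_delta_j (n j : ℕ) (hn : 3 ≤ n) (hj : j ≤ n / 2) :
    (∀ m : ℕ, n = 2 * m + 1 →
      weylDimB m (fun i => if (i : ℕ) < j then 3/2 else 1/2)
        = 2 ^ (n / 2) * (((n : ℚ) - 2 * (j : ℚ) + 1) / ((n : ℚ) - (j : ℚ) + 1))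
            * (n.choose j : ℚ)) ∧
    (∀ m : ℕ, n = 2 * m →
      weylDimD m (fun i => if (i : ℕ) < j then 3/2 else 1/2)
      + weylDimD m (fun i =>
          (if (i : ℕ) < j then (3 : ℚ)/2 else 1/2) * (if (i : ℕ) = m - 1 then -1 else 1))
        = 2 ^ (n / 2) * (((n : ℚ) - 2 * (j : ℚ) + 1) / ((n : ℚ) - (j : ℚ) + 1))
            * (n.choose j : ℚ)) := by
  constructor
  · intro m hm
    have hjm : j ≤ m := by omega
    rw [closedB j m hjm]
    subst hm
    have h2 : (2*m+1)/2 = m := by omega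
    rw [h2]
    have hd : (2*(m:ℚ)+2-(j:ℚ)) = ((2*m+1 : ℕ):ℚ) - (j:ℚ) + 1 := by push_cast; ring
    have hn2 : (2*(m:ℚ)+2-2*(j:ℚ)) = ((2*m+1 : ℕ):ℚ) - 2*(j:ℚ) + 1 := by push_cast; ring
    rw [hd, hn2]
  · intro m hm
    have hjm : j ≤ m := by omega
    have hm1 : 1 ≤ m := by omega
    rw [signD m j hm1, ← two_mul, closedD j m hjm hm1]
    subst hm
    have h2 : (2*m)/2 = m := by omega
    rw [h2]
    have hd : (2*(m:ℚ)+1-(j:ℚ)) = ((2*m : ℕ):ℚ) - (j:ℚ) + 1 := by push_cast; ring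
    have hn2 : (2*(m:ℚ)+1-2*(j:ℚ)) = ((2*m : ℕ):ℚ) - 2*(j:ℚ) + 1 := by push_cast; ring
    rw [hd, hn2]
end
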